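/- arXiv:2009.10294 — 3 statements merged into one kernel-verified Lean document; each statement's English description precedes it below -/
import Mathlib

section
/- Let G be a finite simple graph with at least three vertices of some odd degree d ≥ 3, among them distinct vertices x and y. Then there exists a finite simple graph G' with |E(G')| = |E(G)| and the same degree set as G, in which the number of vertices of degree d is two less than in G, the count of degree-2 vertices increases, and the counts of vertices of every degree other than 2 and d are unchanged, provided 2 is in the degree set of G. -/
open Finset

namespace MergeAux

lemma count_eq_sum {V : Type} [DecidableEq V] (l : List V) (v w : V) :
    l.count v = ∑ i ∈ Finset.range l.length, (if l.getD i w = v then 1 else 0) := by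
  induction l with
  | nil => simp
  | cons a t ih =>
    rw [List.count_cons, List.length_cons, Finset.sum_range_succ']
    simp only [List.getD_cons_succ, List.getD_cons_zero]
    rw [← ih]
    simp [add_comm]

lemma count_eq_card_filter {V : Type} [DecidableEq V] (l : List V) (v w : V) :
    l.count v = ((Finset.range l.length).filter fun i => l.getD i w = v).card := by
  rw [Finset.card_filter, count_eq_sum l v w]

lemma mod_two_cases {n k p : ℕ} (hk : k < n) (hp : p < 2 * n) :
    p % n = k ↔ (p = k ∨ p = k + n) := by
  constructor
  · intro h
    rcases lt_or_ge p n with h1 | h1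
    · left; rwa [Nat.mod_eq_of_lt h1] at h
    · right
      rw [Nat.mod_eq_sub_mod h1, Nat.mod_eq_of_lt (by omega)] at h
      omega
  · rintro (rfl | rfl)
    · exact Nat.mod_eq_of_lt hk
    · simp [Nat.add_mod, Nat.mod_eq_of_lt hk]

lemma sorted_pair_ne {V : Type} [DecidableEq V] [LinearOrder V] {s : Multiset V}
    (hc : ∀ v, s.count v ≤ 2) {n : ℕ} (hn : 2 ≤ n)
    (hlen : Multiset.card s = 2 * n) {w : V} {k : ℕ} (hk : k < n) :
    (s.sort (·≤·)).getD k w ≠ (s.sort (·≤·)).getD (k + n) w := by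
  set l := s.sort (·≤·) with hl
  have hlen' : l.length = 2 * n := by rw [hl, Multiset.length_sort, hlen]
  have hsort : l.Pairwise (·≤·) := s.pairwise_sort _
  intro heq
  set v := l.getD k w with hv
  have hall : ∀ j, k ≤ j → j ≤ k + n → l.getD j w = v := by
    intro j h1 h2
    have hj : j < l.length := by omega
    have hkl : k < l.length := by omega
    have hknl : k + n < l.length := by omega
    have e1 : l.getD k w ≤ l.getD j w := by
      rw [List.getD_eq_getElem l w hkl, List.getD_eq_getElem l w hj]
      rcases eq_or_lt_of_le h1 with rfl | h1
      · exact le_refl _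
      · exact hsort.rel_get_of_lt (a := ⟨k, hkl⟩) (b := ⟨j, hj⟩) h1
    have e2 : l.getD j w ≤ l.getD (k + n) w := by
      rw [List.getD_eq_getElem l w hknl, List.getD_eq_getElem l w hj]
      rcases eq_or_lt_of_le h2 with rfl | h2
      · exact le_refl _
      · exact hsort.rel_get_of_lt (a := ⟨j, hj⟩) (b := ⟨k + n, hknl⟩) h2
    rw [← heq] at e2
    exact le_antisymm e2 e1
  have hcnt : l.count v = ((Finset.range l.length).filter fun i => l.getD i w = v).card :=
    count_eq_card_filter l v w
  have hsub : Finset.Icc k (k + n) ⊆ (Finset.range l.length).filter fun i => l.getD i w = v := by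
    intro j hj
    rw [Finset.mem_Icc] at hj
    rw [Finset.mem_filter, Finset.mem_range]
    exact ⟨by omega, hall j hj.1 hj.2⟩
  have hge : n + 1 ≤ l.count v := by
    rw [hcnt]
    calc n + 1 = (Finset.Icc k (k + n)).card := by rw [Nat.card_Icc]; omega
    _ ≤ _ := Finset.card_le_card hsub
  have : l.count v ≤ 2 := by
    have h2 := hc v
    rwa [← Multiset.sort_eq (s := s) (r := (·≤·)), Multiset.coe_count] at h2
  omega


end MergeAux

open Finset Sum

namespace MergeAux

variable {V : Type} [Fintype V] [DecidableEq V]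

def mergeGraph (G : SimpleGraph V) (x y : V) (m n : ℕ) (ℓ : ℕ → V)
    (pa : ℕ → V ⊕ Fin m) (exy : Bool) : SimpleGraph (V ⊕ Fin m) where
  Adj a b := a ≠ b ∧
    (match a, b with
    | inl v, inl u => (v ≠ x ∧ v ≠ y ∧ u ≠ x ∧ u ≠ y ∧ G.Adj v u)
        ∨ (exy = true ∧ ((v = x ∧ u = y) ∨ (v = y ∧ u = x)))
        ∨ (∃ p, p < 2*n ∧ pa p = Sum.inl v ∧ ℓ p = u)
        ∨ (∃ p, p < 2*n ∧ pa p = Sum.inl u ∧ ℓ p = v)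
    | inl v, inr i => ∃ p, p < 2*n ∧ pa p = Sum.inr i ∧ ℓ p = v
    | inr i, inl v => ∃ p, p < 2*n ∧ pa p = Sum.inr i ∧ ℓ p = v
    | inr _, inr _ => False)
  symm := by
    constructor
    rintro (v | i) (u | j) ⟨hne, h⟩ <;> refine ⟨Ne.symm hne, ?_⟩
    · rcases h with h | h | h | h
      · exact Or.inl ⟨h.2.2.1, h.2.2.2.1, h.1, h.2.1, h.2.2.2.2.symm⟩
      · exact Or.inr (Or.inl ⟨h.1, by tauto⟩)
      · exact Or.inr (Or.inr (Or.inr h))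
      · exact Or.inr (Or.inr (Or.inl h))
    · exact h
    · exact h
    · exact h
  loopless := by constructor; rintro (v | i) ⟨hne, _⟩ <;> exact hne rfl

variable (G : SimpleGraph V) [DecidableRel G.Adj] (x y : V) (m n : ℕ) (ℓ : ℕ → V)
    (pa : ℕ → V ⊕ Fin m) (exy : Bool)

noncomputable instance : DecidableRel (mergeGraph G x y m n ℓ pa exy).Adj :=
  Classical.decRel _

/-- positions assigned to a new vertex -/
def paPos (u : V ⊕ Fin m) : Finset ℕ := (range (2*n)).filter fun p => pa p = u

/-- positions carrying an old vertex -/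
def ℓPos (v : V) : Finset ℕ := (range (2*n)).filter fun p => ℓ p = v

variable {G x y m n ℓ pa exy}
variable (hxy : x ≠ y) (hℓ : ∀ p, p < 2*n → ℓ p ≠ x ∧ ℓ p ≠ y)
    (hpaS : ∀ p, p < 2*n → ∀ v : V, pa p = Sum.inl v → v = x ∨ v = y)

section degrees
include hxy hℓ hpaS

lemma nbhd_inr (i : Fin m) :
    (mergeGraph G x y m n ℓ pa exy).neighborFinset (inr i)
      = (paPos m n pa (inr i)).image (fun p => inl (ℓ p) : ℕ → V ⊕ Fin m) := by
  ext w
  rw [SimpleGraph.mem_neighborFinset]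
  cases w with
  | inl v =>
    simp only [mergeGraph, mem_image, paPos, mem_filter, mem_range]
    constructor
    · rintro ⟨-, p, hp, hpa, hl⟩; exact ⟨p, ⟨hp, hpa⟩, by rw [hl]⟩
    · rintro ⟨p, ⟨hp, hpa⟩, hl⟩
      exact ⟨by simp, p, hp, hpa, by injection hl⟩
  | inr j =>
    simp only [mergeGraph, mem_image, paPos, mem_filter, mem_range]
    constructor
    · rintro ⟨-, h⟩; exact h.elim
    · rintro ⟨p, -, hl⟩; exact absurd hl (by simp)

lemma degree_inr (i : Fin m) (hinj : Set.InjOn ℓ (paPos m n pa (inr i))) :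
    (mergeGraph G x y m n ℓ pa exy).degree (inr i) = (paPos m n pa (inr i)).card := by
  rw [SimpleGraph.degree, nbhd_inr hxy hℓ hpaS]
  rw [Finset.card_image_of_injOn]
  intro a ha b hb hab
  exact hinj ha hb (by injection hab)

lemma nbhd_x :
    (mergeGraph G x y m n ℓ pa exy).neighborFinset (inl x)
      = (if exy then {inl y} else ∅)
        ∪ (paPos m n pa (inl x)).image (fun p => inl (ℓ p) : ℕ → V ⊕ Fin m) := by
  ext w
  rw [SimpleGraph.mem_neighborFinset]
  cases w with
  | inl u =>
    simp only [mergeGraph, mem_union, mem_image, paPos, mem_filter, mem_range]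
    constructor
    · rintro ⟨hne, h | h | h | h⟩
      · exact absurd rfl h.1
      · left; rcases h.2 with ⟨-, rfl⟩ | ⟨h1, -⟩
        · simp [h.1]
        · exact absurd h1 hxy
      · obtain ⟨p, hp, h1, h2⟩ := h
        right; exact ⟨p, ⟨hp, h1⟩, by rw [h2]⟩
      · obtain ⟨p, hp, h1, h2⟩ := h
        exact absurd h2 (hℓ p hp).1
    · intro h
      rcases h with h | ⟨p, ⟨hp, hpa⟩, hl⟩
      · have h2 : exy = true ∧ u = y := by
          by_cases he : exy <;> simp [he] at h <;> simp_all
        obtain ⟨he, rfl⟩ := h2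
        exact ⟨by simpa using hxy, Or.inr (Or.inl ⟨he, by tauto⟩)⟩
      · injection hl with hl
        refine ⟨by simp [← hl]; exact Ne.symm (hℓ p hp).1, Or.inr (Or.inr (Or.inl ⟨p, hp, hpa, hl⟩))⟩
  | inr j =>
    simp only [mergeGraph, mem_union, mem_image, paPos, mem_filter, mem_range]
    constructor
    · rintro ⟨-, p, hp, -, hl⟩; exact absurd hl (hℓ p hp).1
    · intro h
      rcases h with h | ⟨p, -, hl⟩
      · by_cases he : exy <;> simp [he] at h
      · exact absurd hl (by simp)

lemma degree_x (hinj : Set.InjOn ℓ (paPos m n pa (inl x))) :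
    (mergeGraph G x y m n ℓ pa exy).degree (inl x)
      = (if exy then 1 else 0) + (paPos m n pa (inl x)).card := by
  have hdisj : Disjoint (if exy then ({inl y} : Finset (V ⊕ Fin m)) else ∅)
      ((paPos m n pa (inl x)).image (fun p => inl (ℓ p))) := by
    rw [Finset.disjoint_left]
    intro w hw hw2
    simp only [mem_image, paPos, mem_filter, mem_range] at hw2
    obtain ⟨p, ⟨hp, -⟩, hl⟩ := hw2
    cases hE : exy <;> simp [hE] at hw
    subst hw
    exact (hℓ p hp).2 (by injection hl)
  have hinj2 : Set.InjOn (fun p => (inl (ℓ p) : V ⊕ Fin m)) (paPos m n pa (inl x)) :=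
    fun a ha b hb hab => hinj ha hb (by injection hab)
  rw [SimpleGraph.degree, nbhd_x hxy hℓ hpaS, Finset.card_union_of_disjoint hdisj,
    Finset.card_image_of_injOn hinj2]
  congr 1
  by_cases he : exy <;> simp [he]

end degrees

end MergeAux

namespace MergeAux
open Finset Sum

variable {V : Type} [Fintype V] [DecidableEq V]
variable {G : SimpleGraph V} [DecidableRel G.Adj] {x y : V} {m n : ℕ} {ℓ : ℕ → V}
    {pa : ℕ → V ⊕ Fin m} {exy : Bool}
variable (hxy : x ≠ y) (hℓ : ∀ p, p < 2*n → ℓ p ≠ x ∧ ℓ p ≠ y)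
    (hpaS : ∀ p, p < 2*n → ∀ v : V, pa p = Sum.inl v → v = x ∨ v = y)

include hxy hℓ hpaS

lemma nbhd_old (v : V) (hv1 : v ≠ x) (hv2 : v ≠ y) :
    (mergeGraph G x y m n ℓ pa exy).neighborFinset (inl v)
      = ((G.neighborFinset v).filter fun u => u ≠ x ∧ u ≠ y).image inl
        ∪ (ℓPos n ℓ v).image pa := by
  ext w
  rw [SimpleGraph.mem_neighborFinset]
  cases w with
  | inl u =>
    simp only [mergeGraph, mem_union, mem_image, ℓPos, mem_filter, mem_range,
      SimpleGraph.mem_neighborFinset]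
    constructor
    · rintro ⟨hne, h | h | h | h⟩
      · left; exact ⟨u, ⟨⟨h.2.2.2.2, h.2.2.1, h.2.2.2.1⟩, rfl⟩⟩
      · exfalso; rcases h.2 with ⟨h1, -⟩ | ⟨h1, -⟩
        · exact hv1 h1
        · exact hv2 h1
      · exfalso; obtain ⟨p, hp, h1, -⟩ := h
        rcases hpaS p hp v h1 with h | h
        · exact hv1 h
        · exact hv2 h
      · obtain ⟨p, hp, h1, h2⟩ := h
        right; exact ⟨p, ⟨hp, h2⟩, h1⟩
    · intro h
      rcases h with ⟨u', ⟨ha, h1, h2⟩, he⟩ | ⟨p, ⟨hp, h2⟩, h1⟩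
      · injection he with he; subst he
        exact ⟨by simpa using (G.ne_of_adj ha), Or.inl ⟨hv1, hv2, h1, h2, ha⟩⟩
      · rcases hpaS p hp u h1 with h | h <;> subst h
        · exact ⟨by simpa using hv1, Or.inr (Or.inr (Or.inr ⟨p, hp, h1, h2⟩))⟩
        · exact ⟨by simpa using hv2, Or.inr (Or.inr (Or.inr ⟨p, hp, h1, h2⟩))⟩
  | inr i =>
    simp only [mergeGraph, mem_union, mem_image, ℓPos, mem_filter, mem_range]
    constructor
    · rintro ⟨-, p, hp, h1, h2⟩
      right; exact ⟨p, ⟨hp, h2⟩, h1⟩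
    · intro h
      rcases h with ⟨u', -, he⟩ | ⟨p, ⟨hp, h2⟩, h1⟩
      · exact absurd he (by simp)
      · exact ⟨by simp, p, hp, h1, h2⟩

lemma degree_old (v : V) (hv1 : v ≠ x) (hv2 : v ≠ y)
    (hinj : Set.InjOn pa (ℓPos n ℓ v))
    (hcnt : (ℓPos n ℓ v).card
      = (if G.Adj x v then 1 else 0) + (if G.Adj y v then 1 else 0)) :
    (mergeGraph G x y m n ℓ pa exy).degree (inl v) = G.degree v := by
  have hdisj : Disjoint (((G.neighborFinset v).filter fun u => u ≠ x ∧ u ≠ y).image inl)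
      ((ℓPos n ℓ v).image pa) := by
    rw [Finset.disjoint_left]
    rintro w hw1 hw2
    simp only [mem_image, mem_filter] at hw1 hw2
    obtain ⟨u, ⟨-, h1, h2⟩, rfl⟩ := hw1
    obtain ⟨p, hp, hpa⟩ := hw2
    simp only [ℓPos, mem_filter, mem_range] at hp
    rcases hpaS p hp.1 u hpa with h | h
    · exact h1 h
    · exact h2 h
  rw [SimpleGraph.degree, nbhd_old hxy hℓ hpaS v hv1 hv2,
    Finset.card_union_of_disjoint hdisj,
    Finset.card_image_of_injective _ Sum.inl_injective,
    Finset.card_image_of_injOn hinj, hcnt]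
  have key : ((G.neighborFinset v).filter fun u => ¬(u ≠ x ∧ u ≠ y)).card
      = (if G.Adj x v then 1 else 0) + (if G.Adj y v then 1 else 0) := by
    by_cases hax : G.Adj x v <;> by_cases hay : G.Adj y v
    · have : ((G.neighborFinset v).filter fun u => ¬(u ≠ x ∧ u ≠ y)) = {x, y} := by
        ext u
        simp only [mem_filter, SimpleGraph.mem_neighborFinset, mem_insert, mem_singleton]
        constructor
        · rintro ⟨-, h⟩; tauto
        · rintro (rfl | rfl)
          · exact ⟨hax.symm, by tauto⟩
          · exact ⟨hay.symm, by tauto⟩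
      rw [this, Finset.card_insert_of_notMem (by simp [hxy])]; simp [hax, hay]
    · have : ((G.neighborFinset v).filter fun u => ¬(u ≠ x ∧ u ≠ y)) = {x} := by
        ext u
        simp only [mem_filter, SimpleGraph.mem_neighborFinset, mem_singleton]
        constructor
        · rintro ⟨ha, h⟩
          rcases not_and_or.mp h with h | h
          · tauto
          · exfalso; exact hay (by simp at h; exact h ▸ ha.symm)
        · rintro rfl; exact ⟨hax.symm, by tauto⟩
      rw [this]; simp [hax, hay]
    · have : ((G.neighborFinset v).filter fun u => ¬(u ≠ x ∧ u ≠ y)) = {y} := by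
        ext u
        simp only [mem_filter, SimpleGraph.mem_neighborFinset, mem_singleton]
        constructor
        · rintro ⟨ha, h⟩
          rcases not_and_or.mp h with h | h
          · exfalso; exact hax (by simp at h; exact h ▸ ha.symm)
          · tauto
        · rintro rfl; exact ⟨hay.symm, by tauto⟩
      rw [this]; simp [hax, hay]
    · have : ((G.neighborFinset v).filter fun u => ¬(u ≠ x ∧ u ≠ y)) = ∅ := by
        ext u
        simp only [mem_filter, SimpleGraph.mem_neighborFinset, notMem_empty, iff_false]
        rintro ⟨ha, h⟩
        rcases not_and_or.mp h with h | h
        · exact hax (by simp at h; exact h ▸ ha.symm)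
        · exact hay (by simp at h; exact h ▸ ha.symm)
      rw [this]; simp [hax, hay]
  rw [← key, SimpleGraph.degree, ← Finset.card_filter_add_card_filter_not
    (s := G.neighborFinset v) (p := fun u => u ≠ x ∧ u ≠ y)]

end MergeAux

namespace MergeAux
open Finset Sum

variable {V : Type} [Fintype V] [DecidableEq V]

lemma pairInj {W : Type} (f : ℕ → W) (a b : ℕ) (hne : f a ≠ f b) :
    Set.InjOn f (({a, b} : Finset ℕ) : Set ℕ) := by
  intro u hu v hv huv
  simp only [coe_insert, Set.mem_insert_iff, coe_singleton, Set.mem_singleton_iff] at hu hv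
  rcases hu with rfl | rfl <;> rcases hv with rfl | rfl
  · rfl
  · exact absurd huv hne
  · exact absurd huv.symm hne
  · rfl

lemma degree_congr {W : Type} [Fintype W] [DecidableEq W] {G1 G2 : SimpleGraph W}
    [DecidableRel G1.Adj] [DecidableRel G2.Adj] (h : G1 = G2) (v : W) :
    G1.degree v = G2.degree v := by
  have hnb : G1.neighborFinset v = G2.neighborFinset v := by
    ext w
    rw [SimpleGraph.mem_neighborFinset, SimpleGraph.mem_neighborFinset, h]
  rw [SimpleGraph.degree, SimpleGraph.degree, hnb]

lemma mergeGraph_comm (G : SimpleGraph V) (x y : V) (m n : ℕ) (ℓ : ℕ → V)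
    (pa : ℕ → V ⊕ Fin m) (exy : Bool) :
    mergeGraph G x y m n ℓ pa exy = mergeGraph G y x m n ℓ pa exy := by
  have key : ∀ (x' y' : V) (a b : V ⊕ Fin m),
      (mergeGraph G x' y' m n ℓ pa exy).Adj a b → (mergeGraph G y' x' m n ℓ pa exy).Adj a b := by
    intro x' y' a b hab
    obtain ⟨h1, h2⟩ := hab
    refine ⟨h1, ?_⟩
    cases a with
    | inl v =>
      cases b with
      | inl u =>
        rcases h2 with ⟨a1, a2, a3, a4, a5⟩ | ⟨e, h⟩ | h | h
        · exact Or.inl ⟨a2, a1, a4, a3, a5⟩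
        · exact Or.inr (Or.inl ⟨e, h.symm⟩)
        · exact Or.inr (Or.inr (Or.inl h))
        · exact Or.inr (Or.inr (Or.inr h))
      | inr i => exact h2
    | inr i =>
      cases b with
      | inl u => exact h2
      | inr j => exact h2
  ext a b
  exact ⟨key x y a b, key y x a b⟩

lemma case_nonadj [LinearOrder V] (G : SimpleGraph V) [DecidableRel G.Adj] (x y : V) (d : ℕ)
    (hxy : x ≠ y) (hd3 : 3 ≤ d) (hx : G.degree x = d) (hy : G.degree y = d)
    (hA : ¬ G.Adj x y) :
    ∃ (n : ℕ) (ℓ : ℕ → V) (pa : ℕ → V ⊕ Fin (d-2)) (exy : Bool),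
      (∀ v : V, v ≠ x → v ≠ y →
        (mergeGraph G x y (d-2) n ℓ pa exy).degree (inl v) = G.degree v) ∧
      (mergeGraph G x y (d-2) n ℓ pa exy).degree (inl x) = 2 ∧
      (mergeGraph G x y (d-2) n ℓ pa exy).degree (inl y) = 2 ∧
      ∀ i, (mergeGraph G x y (d-2) n ℓ pa exy).degree (inr i) = 2 := by
  have hm : 0 < d - 2 := by omega
  have hd0 : 0 < d := by omega
  set s : Multiset V := (G.neighborFinset x).val + (G.neighborFinset y).val with hs
  have hslen : Multiset.card s = 2 * d := by
    rw [hs, Multiset.card_add]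
    have e1 : Multiset.card (G.neighborFinset x).val = d := hx
    have e2 : Multiset.card (G.neighborFinset y).val = d := hy
    omega
  set L : List V := s.sort (·≤·) with hL
  have hLlen : L.length = 2 * d := by rw [hL, Multiset.length_sort, hslen]
  obtain ⟨ℓ, hℓdef⟩ : ∃ f : ℕ → V, ∀ p, f p = L.getD p x := ⟨_, fun _ => rfl⟩
  have hcnt2 : ∀ v, s.count v ≤ 2 := by
    intro v
    rw [hs, Multiset.count_add]
    have h1 := Multiset.nodup_iff_count_le_one.mp (G.neighborFinset x).nodup v
    have h2 := Multiset.nodup_iff_count_le_one.mp (G.neighborFinset y).nodup v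
    omega
  have hpairs : ∀ k, k < d → ℓ k ≠ ℓ (k + d) := by
    intro k hk
    rw [hℓdef, hℓdef]
    exact sorted_pair_ne hcnt2 (by omega) hslen hk
  have hmemL : ∀ p, p < 2*d → (G.Adj x (ℓ p) ∨ G.Adj y (ℓ p)) := by
    intro p hp
    have hp' : p < L.length := by omega
    have hmem : ℓ p ∈ L := by
      rw [hℓdef, List.getD_eq_getElem L x hp']
      exact List.getElem_mem _
    rw [hL, Multiset.mem_sort, hs, Multiset.mem_add, Finset.mem_val, Finset.mem_val,
      SimpleGraph.mem_neighborFinset, SimpleGraph.mem_neighborFinset] at hmem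
    exact hmem
  have hℓS : ∀ p, p < 2*d → ℓ p ≠ x ∧ ℓ p ≠ y := by
    intro p hp
    constructor
    · rintro rfl
      rcases hmemL p hp with h | h
      · exact G.irrefl h
      · exact hA h.symm
    · rintro rfl
      rcases hmemL p hp with h | h
      · exact hA h
      · exact G.irrefl h
  obtain ⟨pa, hpadef⟩ : ∃ f : ℕ → V ⊕ Fin (d-2), ∀ p, f p =
      if p % d = 0 then inl x else if p % d = 1 then inl y
      else inr ⟨(p % d - 2) % (d - 2), Nat.mod_lt _ hm⟩ := ⟨_, fun _ => rfl⟩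
  have hpax : ∀ p, pa p = inl x ↔ p % d = 0 := by
    intro p
    rw [hpadef p]
    split_ifs with h0 h1
    · simp [h0]
    · simp only [h0, iff_false]
      intro h; exact hxy (by injection h with h; exact h.symm)
    · simp [h0]
  have hpay : ∀ p, pa p = inl y ↔ p % d = 1 := by
    intro p
    rw [hpadef p]
    split_ifs with h0 h1
    · constructor
      · intro h; exact absurd (Sum.inl_injective h) hxy
      · omega
    · simp [h1]
    · simp only [false_iff, iff_false, reduceCtorEq]
      omega
  have hpai : ∀ p (i : Fin (d-2)), pa p = inr i ↔ p % d = (i : ℕ) + 2 := by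
    intro p i
    have hplt : p % d < d := Nat.mod_lt _ hd0
    rw [hpadef p]
    split_ifs with h0 h1
    · simp only [false_iff, iff_false, reduceCtorEq]
      omega
    · simp only [false_iff, iff_false, reduceCtorEq]
      omega
    · constructor
      · intro h
        injection h with h
        have hi : ((p % d - 2) % (d - 2) : ℕ) = (i : ℕ) := by rw [← h]
        rw [Nat.mod_eq_of_lt (by omega)] at hi
        omega
      · intro h
        have hv : ((p % d - 2) % (d-2) : ℕ) = (i:ℕ) := by
          rw [h]; simp [Nat.mod_eq_of_lt i.isLt]
        congr 1
        exact Fin.ext hv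
  have hpaS : ∀ p, p < 2*d → ∀ v : V, pa p = inl v → v = x ∨ v = y := by
    intro p hp v h
    rw [hpadef p] at h
    split_ifs at h with h0 h1
    · exact Or.inl (by injection h with h; exact h.symm)
    · exact Or.inr (by injection h with h; exact h.symm)
  have hposx : paPos (d-2) d pa (inl x) = {0, d} := by
    ext p
    simp only [paPos, mem_filter, mem_range, hpax, mem_insert, mem_singleton]
    constructor
    · rintro ⟨hp, h⟩
      have := (mod_two_cases hd0 hp).mp h
      omega
    · rintro (rfl | rfl)
      · exact ⟨by omega, Nat.zero_mod _⟩
      · exact ⟨by omega, Nat.mod_self _⟩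
  have hposy : paPos (d-2) d pa (inl y) = {1, 1 + d} := by
    ext p
    simp only [paPos, mem_filter, mem_range, hpay, mem_insert, mem_singleton]
    constructor
    · rintro ⟨hp, h⟩
      have := (mod_two_cases (show 1 < d by omega) hp).mp h
      omega
    · rintro (rfl | rfl)
      · exact ⟨by omega, Nat.mod_eq_of_lt (by omega)⟩
      · refine ⟨by omega, ?_⟩
        rw [Nat.add_mod, Nat.mod_self]
        simp [Nat.mod_eq_of_lt (show 1 < d by omega)]
  have hposi : ∀ i : Fin (d-2), paPos (d-2) d pa (inr i) = {(i:ℕ) + 2, (i:ℕ) + 2 + d} := by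
    intro i
    have hi2 : (i:ℕ) + 2 < d := by have := i.isLt; omega
    ext p
    simp only [paPos, mem_filter, mem_range, hpai, mem_insert, mem_singleton]
    constructor
    · rintro ⟨hp, h⟩
      have := (mod_two_cases hi2 hp).mp h
      omega
    · rintro (rfl | rfl)
      · exact ⟨by omega, Nat.mod_eq_of_lt hi2⟩
      · refine ⟨by omega, ?_⟩
        rw [Nat.add_mod, Nat.mod_self]
        simp [Nat.mod_eq_of_lt hi2]
  have hmodpos : ∀ p q v, p ∈ ℓPos d ℓ v → q ∈ ℓPos d ℓ v → pa p = pa q → p = q := by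
    intro p q v hp hq hpq
    simp only [ℓPos, mem_filter, mem_range] at hp hq
    by_contra hne
    have hmod : p % d = q % d := by
      rcases hval : pa p with w | i
      · rcases hpaS p hp.1 w hval with rfl | rfl
        · rw [(hpax p).mp hval, ((hpax q).mp (hpq ▸ hval)).symm]
        · rw [(hpay p).mp hval, ((hpay q).mp (hpq ▸ hval)).symm]
      · rw [(hpai p i).mp hval, ((hpai q i).mp (hpq ▸ hval)).symm]
    have hklt : p % d < d := Nat.mod_lt _ hd0
    have h1 : p = p % d ∨ p = p % d + d := (mod_two_cases hklt hp.1).mp rfl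
    have h2 : q = p % d ∨ q = p % d + d := (mod_two_cases hklt hq.1).mp hmod.symm
    have hne2 : ℓ (p % d) ≠ ℓ (p % d + d) := hpairs _ hklt
    have e1 : ℓ p = v := hp.2
    have e2 : ℓ q = v := hq.2
    rcases h1 with h1 | h1 <;> rcases h2 with h2 | h2
    · omega
    · rw [h1] at e1; rw [h2] at e2; exact hne2 (e1.trans e2.symm)
    · rw [h1] at e1; rw [h2] at e2; exact hne2 (e2.trans e1.symm)
    · omega
  have hinjv : ∀ v, Set.InjOn pa ((ℓPos d ℓ v : Finset ℕ) : Set ℕ) := by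
    intro v p hp q hq hpq
    exact hmodpos p q v (by simpa using hp) (by simpa using hq) hpq
  have hcntv : ∀ v : V, (ℓPos d ℓ v).card
      = (if G.Adj x v then 1 else 0) + (if G.Adj y v then 1 else 0) := by
    intro v
    have e1 : ℓPos d ℓ v = (range L.length).filter fun i => L.getD i x = v := by
      rw [hLlen]
      exact Finset.filter_congr (fun p _ => by simp [hℓdef p])
    have e2 : L.count v = s.count v := by
      conv_rhs => rw [← Multiset.sort_eq (s := s) (r := (·≤·))]
      rw [Multiset.coe_count]
    rw [e1, ← count_eq_card_filter, e2, hs, Multiset.count_add]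
    congr 1
    · by_cases hax : G.Adj x v
      · rw [if_pos hax, Multiset.count_eq_one_of_mem (G.neighborFinset x).nodup
          (by rw [Finset.mem_val, SimpleGraph.mem_neighborFinset]; exact hax)]
      · rw [if_neg hax, Multiset.count_eq_zero_of_notMem
          (by rw [Finset.mem_val, SimpleGraph.mem_neighborFinset]; exact hax)]
    · by_cases hay : G.Adj y v
      · rw [if_pos hay, Multiset.count_eq_one_of_mem (G.neighborFinset y).nodup
          (by rw [Finset.mem_val, SimpleGraph.mem_neighborFinset]; exact hay)]
      · rw [if_neg hay, Multiset.count_eq_zero_of_notMem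
          (by rw [Finset.mem_val, SimpleGraph.mem_neighborFinset]; exact hay)]
  refine ⟨d, ℓ, pa, false, ?_, ?_, ?_, ?_⟩
  · intro v hv1 hv2
    exact degree_old hxy hℓS hpaS v hv1 hv2 (hinjv v) (hcntv v)
  · rw [degree_x hxy hℓS hpaS (by
      rw [hposx]; exact pairInj ℓ 0 d (by simpa using hpairs 0 hd0)), hposx]
    rw [Finset.card_insert_of_notMem (by simp; omega), Finset.card_singleton]
    norm_num
  · rw [degree_congr (mergeGraph_comm G x y (d-2) d ℓ pa false) (inl y)]
    have hℓS' : ∀ p, p < 2*d → ℓ p ≠ y ∧ ℓ p ≠ x := fun p hp => (hℓS p hp).symm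
    have hpaS' : ∀ p, p < 2*d → ∀ v : V, pa p = inl v → v = y ∨ v = x :=
      fun p hp v h => (hpaS p hp v h).symm
    rw [degree_x hxy.symm hℓS' hpaS' (by
      rw [hposy]; exact pairInj ℓ 1 (1 + d) (hpairs 1 (by omega))), hposy]
    rw [Finset.card_insert_of_notMem (by simp; omega), Finset.card_singleton]
    norm_num
  · intro i
    rw [degree_inr hxy hℓS hpaS i (by
      rw [hposi i]
      exact pairInj ℓ ((i:ℕ)+2) ((i:ℕ)+2+d) (hpairs ((i:ℕ)+2) (by have := i.isLt; omega))),
      hposi i]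
    rw [Finset.card_insert_of_notMem (by simp; omega), Finset.card_singleton]

lemma case_adj [LinearOrder V] (G : SimpleGraph V) [DecidableRel G.Adj] (x y : V) (d : ℕ)
    (hxy : x ≠ y) (hd3 : 3 ≤ d) (hx : G.degree x = d) (hy : G.degree y = d)
    (hA : G.Adj x y) :
    ∃ (n : ℕ) (ℓ : ℕ → V) (pa : ℕ → V ⊕ Fin (d-2)) (exy : Bool),
      (∀ v : V, v ≠ x → v ≠ y →
        (mergeGraph G x y (d-2) n ℓ pa exy).degree (inl v) = G.degree v) ∧
      (mergeGraph G x y (d-2) n ℓ pa exy).degree (inl x) = 2 ∧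
      (mergeGraph G x y (d-2) n ℓ pa exy).degree (inl y) = 2 ∧
      ∀ i, (mergeGraph G x y (d-2) n ℓ pa exy).degree (inr i) = 2 := by
  have hm : 0 < d - 2 := by omega
  have hn0 : 0 < d - 1 := by omega
  set A : Finset V := (G.neighborFinset x).erase y with hAdef
  set B : Finset V := (G.neighborFinset y).erase x with hBdef
  have hAcard : A.card = d - 1 := by
    rw [hAdef, Finset.card_erase_of_mem (by rw [SimpleGraph.mem_neighborFinset]; exact hA)]
    rw [← SimpleGraph.degree, hx]
  have hBcard : B.card = d - 1 := by
    rw [hBdef, Finset.card_erase_of_mem (by rw [SimpleGraph.mem_neighborFinset]; exact hA.symm)]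
    rw [← SimpleGraph.degree, hy]
  set s : Multiset V := A.val + B.val with hs
  have hslen : Multiset.card s = 2 * (d - 1) := by
    rw [hs, Multiset.card_add]
    have e1 : Multiset.card A.val = d - 1 := hAcard
    have e2 : Multiset.card B.val = d - 1 := hBcard
    omega
  set L : List V := s.sort (·≤·) with hL
  have hLlen : L.length = 2 * (d - 1) := by rw [hL, Multiset.length_sort, hslen]
  obtain ⟨ℓ, hℓdef⟩ : ∃ f : ℕ → V, ∀ p, f p = L.getD p x := ⟨_, fun _ => rfl⟩
  have hcnt2 : ∀ v, s.count v ≤ 2 := by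
    intro v
    rw [hs, Multiset.count_add]
    have h1 := Multiset.nodup_iff_count_le_one.mp A.nodup v
    have h2 := Multiset.nodup_iff_count_le_one.mp B.nodup v
    omega
  have hpairs : ∀ k, k < d - 1 → ℓ k ≠ ℓ (k + (d - 1)) := by
    intro k hk
    rw [hℓdef, hℓdef]
    exact sorted_pair_ne hcnt2 (by omega) hslen hk
  have hmemL : ∀ p, p < 2*(d-1) → (ℓ p ∈ A ∨ ℓ p ∈ B) := by
    intro p hp
    have hp' : p < L.length := by omega
    have hmem : ℓ p ∈ L := by
      rw [hℓdef, List.getD_eq_getElem L x hp']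
      exact List.getElem_mem _
    rw [hL, Multiset.mem_sort, hs, Multiset.mem_add, Finset.mem_val, Finset.mem_val] at hmem
    exact hmem
  have hℓS : ∀ p, p < 2*(d-1) → ℓ p ≠ x ∧ ℓ p ≠ y := by
    intro p hp
    rcases hmemL p hp with h | h
    · rw [hAdef, Finset.mem_erase, SimpleGraph.mem_neighborFinset] at h
      exact ⟨fun he => G.irrefl (he ▸ h.2), h.1⟩
    · rw [hBdef, Finset.mem_erase, SimpleGraph.mem_neighborFinset] at h
      exact ⟨h.1, fun he => G.irrefl (he ▸ h.2)⟩
  obtain ⟨pa, hpadef⟩ : ∃ f : ℕ → V ⊕ Fin (d-2), ∀ p, f p =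
      if p = 0 then inl x else if p = d - 1 then inl y
      else inr ⟨(p % (d-1) - 1) % (d - 2), Nat.mod_lt _ hm⟩ := ⟨_, fun _ => rfl⟩
  have hpax : ∀ p, pa p = inl x ↔ p = 0 := by
    intro p
    rw [hpadef p]
    split_ifs with h0 h1
    · simp [h0]
    · simp only [h0, iff_false]
      intro h; exact hxy (Sum.inl_injective h).symm
    · simp [h0]
  have hpay : ∀ p, pa p = inl y ↔ p = d - 1 := by
    intro p
    rw [hpadef p]
    split_ifs with h0 h1
    · constructor
      · intro h; exact absurd (Sum.inl_injective h) hxy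
      · omega
    · simp [h1]
    · simp only [false_iff, iff_false, reduceCtorEq]
      omega
  have hpai : ∀ p, p < 2*(d-1) → ∀ i : Fin (d-2),
      (pa p = inr i ↔ (p = (i:ℕ) + 1 ∨ p = (i:ℕ) + d)) := by
    intro p hp i
    have hilt : (i:ℕ) < d - 2 := i.isLt
    have hrlt : p % (d-1) < d - 1 := Nat.mod_lt _ hn0
    rw [hpadef p]
    split_ifs with h0 h1
    · simp only [false_iff, iff_false, reduceCtorEq]
      omega
    · simp only [false_iff, iff_false, reduceCtorEq]
      omega
    · constructor
      · intro h
        injection h with h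
        have hi : ((p % (d-1) - 1) % (d - 2) : ℕ) = (i : ℕ) := by rw [← h]
        have hr1 : 1 ≤ p % (d-1) := by
          rcases Nat.eq_zero_or_pos (p % (d-1)) with h2 | h2
          · exfalso
            have := (mod_two_cases hn0 hp).mp h2
            omega
          · omega
        rw [Nat.mod_eq_of_lt (by omega)] at hi
        have : p % (d-1) = (i:ℕ) + 1 := by omega
        have := (mod_two_cases (show (i:ℕ) + 1 < d - 1 by omega) hp).mp this
        omega
      · intro h
        have hmod : p % (d - 1) = (i:ℕ) + 1 := by
          apply (mod_two_cases (show (i:ℕ) + 1 < d - 1 by omega) hp).mpr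
          omega
        have hv : ((p % (d-1) - 1) % (d-2) : ℕ) = (i:ℕ) := by
          rw [hmod]; simp [Nat.mod_eq_of_lt hilt]
        congr 1
        exact Fin.ext hv
  have hpaS : ∀ p, p < 2*(d-1) → ∀ v : V, pa p = inl v → v = x ∨ v = y := by
    intro p hp v h
    rw [hpadef p] at h
    split_ifs at h with h0 h1
    · exact Or.inl (Sum.inl_injective h).symm
    · exact Or.inr (Sum.inl_injective h).symm
  have hposx : paPos (d-2) (d-1) pa (inl x) = {0} := by
    ext p
    simp only [paPos, mem_filter, mem_range, hpax, mem_singleton]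
    constructor
    · rintro ⟨-, h⟩; exact h
    · rintro rfl; exact ⟨by omega, rfl⟩
  have hposy : paPos (d-2) (d-1) pa (inl y) = {d - 1} := by
    ext p
    simp only [paPos, mem_filter, mem_range, hpay, mem_singleton]
    constructor
    · rintro ⟨-, h⟩; exact h
    · rintro rfl; exact ⟨by omega, rfl⟩
  have hposi : ∀ i : Fin (d-2), paPos (d-2) (d-1) pa (inr i) = {(i:ℕ) + 1, (i:ℕ) + d} := by
    intro i
    have hilt : (i:ℕ) < d - 2 := i.isLt
    ext p
    simp only [paPos, mem_filter, mem_range, mem_insert, mem_singleton]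
    constructor
    · rintro ⟨hp, h⟩
      exact (hpai p hp i).mp h
    · rintro (rfl | rfl)
      · exact ⟨by omega, (hpai _ (by omega) i).mpr (Or.inl rfl)⟩
      · exact ⟨by omega, (hpai _ (by omega) i).mpr (Or.inr rfl)⟩
  have hmodpos : ∀ p q v, p ∈ ℓPos (d-1) ℓ v → q ∈ ℓPos (d-1) ℓ v → pa p = pa q → p = q := by
    intro p q v hp hq hpq
    simp only [ℓPos, mem_filter, mem_range] at hp hq
    rcases hval : pa p with w | i
    · rcases hpaS p hp.1 w hval with rfl | rfl
      · rw [(hpax p).mp hval, (hpax q).mp (hpq ▸ hval)]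
      · rw [(hpay p).mp hval, (hpay q).mp (hpq ▸ hval)]
    · have h1 := (hpai p hp.1 i).mp hval
      have h2 := (hpai q hq.1 i).mp (hpq ▸ hval)
      by_contra hne
      have hne2 : ℓ ((i:ℕ) + 1) ≠ ℓ ((i:ℕ) + 1 + (d - 1)) := hpairs _ (by have := i.isLt; omega)
      have hid : (i:ℕ) + 1 + (d - 1) = (i:ℕ) + d := by omega
      rw [hid] at hne2
      have e1 : ℓ p = v := hp.2
      have e2 : ℓ q = v := hq.2
      rcases h1 with rfl | rfl <;> rcases h2 with h2 | h2
      · omega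
      · rw [h2] at e2; exact hne2 (e1.trans e2.symm)
      · rw [h2] at e2; exact hne2 (e2.trans e1.symm)
      · omega
  have hinjv : ∀ v, Set.InjOn pa ((ℓPos (d-1) ℓ v : Finset ℕ) : Set ℕ) := by
    intro v p hp q hq hpq
    exact hmodpos p q v (by simpa using hp) (by simpa using hq) hpq
  have hcntv : ∀ v : V, v ≠ x → v ≠ y → (ℓPos (d-1) ℓ v).card
      = (if G.Adj x v then 1 else 0) + (if G.Adj y v then 1 else 0) := by
    intro v hv1 hv2
    have e1 : ℓPos (d-1) ℓ v = (range L.length).filter fun i => L.getD i x = v := by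
      rw [hLlen]
      exact Finset.filter_congr (fun p _ => by simp [hℓdef p])
    have e2 : L.count v = s.count v := by
      conv_rhs => rw [← Multiset.sort_eq (s := s) (r := (·≤·))]
      rw [Multiset.coe_count]
    have hvA : v ∈ A ↔ G.Adj x v := by
      rw [hAdef, Finset.mem_erase, SimpleGraph.mem_neighborFinset]
      exact ⟨fun h => h.2, fun h => ⟨hv2, h⟩⟩
    have hvB : v ∈ B ↔ G.Adj y v := by
      rw [hBdef, Finset.mem_erase, SimpleGraph.mem_neighborFinset]
      exact ⟨fun h => h.2, fun h => ⟨hv1, h⟩⟩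
    rw [e1, ← count_eq_card_filter, e2, hs, Multiset.count_add]
    congr 1
    · by_cases hax : G.Adj x v
      · rw [if_pos hax, Multiset.count_eq_one_of_mem A.nodup (by
          rw [Finset.mem_val]; exact hvA.mpr hax)]
      · rw [if_neg hax, Multiset.count_eq_zero_of_notMem (by
          rw [Finset.mem_val]; exact fun hc => hax (hvA.mp hc))]
    · by_cases hay : G.Adj y v
      · rw [if_pos hay, Multiset.count_eq_one_of_mem B.nodup (by
          rw [Finset.mem_val]; exact hvB.mpr hay)]
      · rw [if_neg hay, Multiset.count_eq_zero_of_notMem (by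
          rw [Finset.mem_val]; exact fun hc => hay (hvB.mp hc))]
  refine ⟨d - 1, ℓ, pa, true, ?_, ?_, ?_, ?_⟩
  · intro v hv1 hv2
    exact degree_old hxy hℓS hpaS v hv1 hv2 (hinjv v) (hcntv v hv1 hv2)
  · rw [degree_x hxy hℓS hpaS (by
      rw [hposx]
      intro a ha b hb hab
      simp only [coe_singleton, Set.mem_singleton_iff] at ha hb
      rw [ha, hb]), hposx]
    rw [Finset.card_singleton]
    norm_num
  · rw [degree_congr (mergeGraph_comm G x y (d-2) (d-1) ℓ pa true) (inl y)]
    have hℓS' : ∀ p, p < 2*(d-1) → ℓ p ≠ y ∧ ℓ p ≠ x := fun p hp => (hℓS p hp).symm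
    have hpaS' : ∀ p, p < 2*(d-1) → ∀ v : V, pa p = inl v → v = y ∨ v = x :=
      fun p hp v h => (hpaS p hp v h).symm
    rw [degree_x hxy.symm hℓS' hpaS' (by
      rw [hposy]
      intro a ha b hb hab
      simp only [coe_singleton, Set.mem_singleton_iff] at ha hb
      rw [ha, hb]), hposy]
    rw [Finset.card_singleton]
    norm_num
  · intro i
    rw [degree_inr hxy hℓS hpaS i (by
      rw [hposi i]
      apply pairInj ℓ ((i:ℕ)+1) ((i:ℕ)+d)
      have := hpairs ((i:ℕ)+1) (by have := i.isLt; omega)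
      have hid : (i:ℕ) + 1 + (d - 1) = (i:ℕ) + d := by omega
      rwa [hid] at this),
      hposi i]
    rw [Finset.card_insert_of_notMem (by simp; omega), Finset.card_singleton]

end MergeAux

namespace MergeAux
open Finset Sum

variable {V : Type} [Fintype V] [DecidableEq V]

lemma exists_merge_data (G : SimpleGraph V) [DecidableRel G.Adj] (x y : V) (d : ℕ)
    (hxy : x ≠ y) (hd3 : 3 ≤ d) (hx : G.degree x = d) (hy : G.degree y = d) :
    ∃ (n : ℕ) (ℓ : ℕ → V) (pa : ℕ → V ⊕ Fin (d-2)) (exy : Bool),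
      (∀ v : V, v ≠ x → v ≠ y →
        (mergeGraph G x y (d-2) n ℓ pa exy).degree (inl v) = G.degree v) ∧
      (mergeGraph G x y (d-2) n ℓ pa exy).degree (inl x) = 2 ∧
      (mergeGraph G x y (d-2) n ℓ pa exy).degree (inl y) = 2 ∧
      ∀ i, (mergeGraph G x y (d-2) n ℓ pa exy).degree (inr i) = 2 := by
  letI : LinearOrder V := LinearOrder.lift' (Fintype.equivFin V) (Fintype.equivFin V).injective
  by_cases hA : G.Adj x y
  · exact case_adj G x y d hxy hd3 hx hy hA
  · exact case_nonadj G x y d hxy hd3 hx hy hA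

lemma degree_comap {α β : Type} [Fintype α] [Fintype β] [DecidableEq α] [DecidableEq β]
    (H : SimpleGraph β) [DecidableRel H.Adj] (e : α ≃ β) (a : α)
    (i : Fintype ((H.comap ⇑e).neighborSet a)) :
    @SimpleGraph.degree _ (H.comap ⇑e) a i = H.degree (e a) := by
  have key : (H.comap ⇑e).neighborFinset a = (H.neighborFinset (e a)).map e.symm.toEmbedding := by
    ext b
    rw [SimpleGraph.mem_neighborFinset, Finset.mem_map_equiv, SimpleGraph.mem_neighborFinset,
      SimpleGraph.comap_adj]
    simp
  have : ((H.comap ⇑e).neighborFinset a).card = (H.neighborFinset (e a)).card := by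
    rw [key, Finset.card_map]
  unfold SimpleGraph.degree
  exact this

end MergeAux

open MergeAux Finset in
set_option maxHeartbeats 2000000 in
/-- The merging construction. -/
theorem merge_odd_degree_vertices {V : Type} [Fintype V] [DecidableEq V]
    (G : SimpleGraph V) [DecidableRel G.Adj] (d : ℕ) (hd3 : 3 ≤ d) (hodd : Odd d)
    (hcount : 3 ≤ (Finset.univ.filter fun v => G.degree v = d).card)
    (x y : V) (hxy : x ≠ y) (hx : G.degree x = d) (hy : G.degree y = d)
    (h2 : 2 ∈ Finset.univ.image (fun v => G.degree v)) :
    ∃ (p : ℕ) (G' : SimpleGraph (Fin p)) (inst : DecidableRel G'.Adj),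
      (@SimpleGraph.edgeFinset _ G' (@SimpleGraph.fintypeEdgeSet _ G' _ inst)).card
        = G.edgeFinset.card ∧
      Finset.univ.image (fun v => @SimpleGraph.degree _ G' v
        (@SimpleGraph.neighborSetFintype _ G' _ inst v))
        = Finset.univ.image (fun v => G.degree v) ∧
      (Finset.univ.filter fun v => @SimpleGraph.degree _ G' v
          (@SimpleGraph.neighborSetFintype _ G' _ inst v) = d).card
        = (Finset.univ.filter fun v => G.degree v = d).card - 2 ∧
      (Finset.univ.filter fun v => G.degree v = 2).card
        < (Finset.univ.filter fun v => @SimpleGraph.degree _ G' v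
            (@SimpleGraph.neighborSetFintype _ G' _ inst v) = 2).card ∧
      ∀ e : ℕ, e ≠ 2 → e ≠ d →
        (Finset.univ.filter fun v => @SimpleGraph.degree _ G' v
            (@SimpleGraph.neighborSetFintype _ G' _ inst v) = e).card
          = (Finset.univ.filter fun v => G.degree v = e).card := by
  obtain ⟨n, ℓ, pa, exy, hold, hdx, hdy, hdi⟩ := exists_merge_data G x y d hxy hd3 hx hy
  set H : SimpleGraph (V ⊕ Fin (d-2)) := mergeGraph G x y (d-2) n ℓ pa exy with hHdef
  obtain ⟨e⟩ : Nonempty (Fin (Fintype.card V + (d-2)) ≃ (V ⊕ Fin (d-2))) :=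
    ⟨finSumFinEquiv.symm.trans (Equiv.sumCongr (Fintype.equivFin V).symm (Equiv.refl (Fin (d-2))))⟩
  set G' : SimpleGraph (Fin (Fintype.card V + (d-2))) := H.comap ⇑e with hG'def
  letI instG' : DecidableRel G'.Adj := Classical.decRel _
  have hdeg : ∀ a, G'.degree a = H.degree (e a) := fun a => degree_comap H e a _
  -- auxiliary counting facts
  have hsub_xy : ({x, y} : Finset V) ⊆ univ.filter (fun v => G.degree v = d) := by
    intro u hu
    simp only [mem_insert, mem_singleton] at hu
    rcases hu with rfl | rfl <;> simp [hx, hy]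
  have hcard_xy : ({x, y} : Finset V).card = 2 := by
    rw [card_insert_of_notMem (by simp [hxy]), card_singleton]
  have hzX : ∃ z : V, z ≠ x ∧ z ≠ y ∧ G.degree z = d := by
    have h1 := Finset.le_card_sdiff ({x, y} : Finset V) (univ.filter fun v => G.degree v = d)
    have h0 : 0 < ((univ.filter fun v => G.degree v = d) \ {x, y}).card := by omega
    obtain ⟨z, hz⟩ := Finset.card_pos.mp h0
    rw [mem_sdiff, mem_filter, mem_insert, mem_singleton] at hz
    exact ⟨z, fun h => hz.2 (Or.inl h), fun h => hz.2 (Or.inr h), hz.1.2⟩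
  have hV_ne : ∀ k, k ≠ 2 → k ≠ d →
      (univ.filter fun v : V => H.degree (Sum.inl v) = k)
        = univ.filter (fun v => G.degree v = k) := by
    intro k hk2 hkd
    ext v
    simp only [mem_filter, mem_univ, true_and]
    by_cases h1 : v = x
    · subst h1; rw [hdx, hx]
      exact ⟨fun h => absurd h.symm hk2, fun h => absurd h.symm hkd⟩
    · by_cases h2' : v = y
      · subst h2'; rw [hdy, hy]
        exact ⟨fun h => absurd h.symm hk2, fun h => absurd h.symm hkd⟩
      · rw [hold v h1 h2']
  have hV_d : (univ.filter fun v : V => H.degree (Sum.inl v) = d)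
      = (univ.filter fun v => G.degree v = d) \ {x, y} := by
    ext v
    simp only [mem_filter, mem_univ, true_and, mem_sdiff, mem_insert, mem_singleton]
    by_cases h1 : v = x
    · subst h1; rw [hdx]
      exact ⟨fun h => absurd h (by omega), fun h => absurd (Or.inl rfl) h.2⟩
    · by_cases h2' : v = y
      · subst h2'; rw [hdy]
        exact ⟨fun h => absurd h (by omega), fun h => absurd (Or.inr rfl) h.2⟩
      · rw [hold v h1 h2']
        constructor
        · intro h; exact ⟨h, by tauto⟩
        · intro h; exact h.1
  have hV2_card : (univ.filter fun v : V => G.degree v = 2).card + 2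
      ≤ (univ.filter fun v : V => H.degree (Sum.inl v) = 2).card := by
    have hsub2 : (univ.filter fun v : V => G.degree v = 2) ∪ {x, y}
        ⊆ univ.filter (fun v => H.degree (Sum.inl v) = 2) := by
      intro u hu
      rcases mem_union.mp hu with hu | hu
      · simp only [mem_filter, mem_univ, true_and] at hu ⊢
        have h1 : u ≠ x := fun h => by rw [h, hx] at hu; omega
        have h2' : u ≠ y := fun h => by rw [h, hy] at hu; omega
        rw [hold u h1 h2']; exact hu
      · simp only [mem_insert, mem_singleton] at hu
        rcases hu with rfl | rfl <;> simp only [mem_filter, mem_univ, true_and]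
        · exact hdx
        · exact hdy
    have hdisj : Disjoint (univ.filter fun v : V => G.degree v = 2) ({x, y} : Finset V) := by
      rw [Finset.disjoint_right]
      intro u hu hu2
      simp only [mem_insert, mem_singleton] at hu
      simp only [mem_filter, mem_univ, true_and] at hu2
      rcases hu with rfl | rfl
      · rw [hx] at hu2; omega
      · rw [hy] at hu2; omega
    calc (univ.filter fun v : V => G.degree v = 2).card + 2
        = ((univ.filter fun v : V => G.degree v = 2) ∪ {x, y}).card := by
          rw [Finset.card_union_of_disjoint hdisj, hcard_xy]
      _ ≤ _ := Finset.card_le_card hsub2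
  have hsplitf : ∀ k : ℕ, (univ.filter fun w : V ⊕ Fin (d-2) => H.degree w = k).card
      = (univ.filter fun v : V => H.degree (Sum.inl v) = k).card
        + (univ.filter fun i : Fin (d-2) => H.degree (Sum.inr i) = k).card := by
    intro k
    rw [Finset.card_filter, Finset.card_filter, Finset.card_filter, Fintype.sum_sum_type]
  have hfin : ∀ k, (univ.filter fun i : Fin (d-2) => H.degree (Sum.inr i) = k)
      = if 2 = k then (univ : Finset (Fin (d-2))) else ∅ := by
    intro k
    have hc := Finset.filter_congr (s := (univ : Finset (Fin (d-2))))
      (p := fun i => H.degree (Sum.inr i) = k) (q := fun _ => 2 = k)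
      (fun i _ => by rw [hdi i])
    rw [hc, Finset.filter_const]
  have hsum_split : ∀ f : V → ℕ,
      ∑ v, f v = f x + (f y + ∑ v ∈ (univ.erase x).erase y, f v) := by
    intro f
    rw [← Finset.add_sum_erase _ f (mem_univ x),
      ← Finset.add_sum_erase _ f (mem_erase.mpr ⟨hxy.symm, mem_univ y⟩)]
  have hsumW : ∑ w : V ⊕ Fin (d-2), H.degree w = ∑ v : V, G.degree v := by
    rw [Fintype.sum_sum_type]
    have hifin : ∑ i : Fin (d-2), H.degree (Sum.inr i) = 2 * (d-2) := by
      rw [Finset.sum_congr rfl (fun i _ => hdi i), Finset.sum_const, Finset.card_univ,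
        Fintype.card_fin, smul_eq_mul]
      ring
    have hS : ∑ v ∈ (univ.erase x).erase y, H.degree (Sum.inl v)
        = ∑ v ∈ (univ.erase x).erase y, G.degree v := by
      apply Finset.sum_congr rfl
      intro v hv
      rw [mem_erase, mem_erase] at hv
      exact hold v hv.2.1 hv.1
    rw [hifin, hsum_split (fun v => H.degree (Sum.inl v)), hsum_split (fun v => G.degree v),
      hdx, hdy, hx, hy, hS]
    omega
  have hreidx : ∀ k, (univ.filter fun a => G'.degree a = k).card
      = (univ.filter fun w => H.degree w = k).card := by
    intro k
    rw [Finset.card_filter, Finset.card_filter]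
    rw [Finset.sum_congr rfl (fun a _ => by rw [hdeg a])]
    exact Equiv.sum_comp e (fun w => if H.degree w = k then 1 else 0)
  refine ⟨Fintype.card V + (d-2), G', instG', ?_, ?_, ?_, ?_, ?_⟩
  · -- edge count
    have hG'e := SimpleGraph.sum_degrees_eq_twice_card_edges G'
    have hGe := SimpleGraph.sum_degrees_eq_twice_card_edges G
    have hss : ∑ a, G'.degree a = ∑ v, G.degree v := by
      calc ∑ a, G'.degree a = ∑ a, H.degree (e a) := Finset.sum_congr rfl (fun a _ => hdeg a)
        _ = ∑ w, H.degree w := Equiv.sum_comp e (fun w => H.degree w)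
        _ = ∑ v, G.degree v := hsumW
    omega
  · -- degree set
    have h1 : Finset.univ.image (fun v => G'.degree v)
        = Finset.univ.image (fun w => H.degree w) := by
      rw [show (fun v => G'.degree v) = (fun w => H.degree w) ∘ ⇑e from funext hdeg,
        ← Finset.image_image, Finset.image_univ_equiv]
    rw [h1]
    ext k
    simp only [Finset.mem_image, Finset.mem_univ, true_and]
    constructor
    · rintro ⟨w, hw⟩
      cases w with
      | inl v =>
        by_cases h1 : v = x
        · subst h1; rw [hdx] at hw
          obtain ⟨u, -, hu⟩ := Finset.mem_image.mp h2
          exact ⟨u, hu.trans hw⟩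
        · by_cases h2' : v = y
          · subst h2'; rw [hdy] at hw
            obtain ⟨u, -, hu⟩ := Finset.mem_image.mp h2
            exact ⟨u, hu.trans hw⟩
          · rw [hold v h1 h2'] at hw
            exact ⟨v, hw⟩
      | inr i =>
        rw [hdi i] at hw
        obtain ⟨u, -, hu⟩ := Finset.mem_image.mp h2
        exact ⟨u, hu.trans hw⟩
    · rintro ⟨v, hv⟩
      by_cases h1 : v = x
      · subst h1; rw [hx] at hv
        obtain ⟨z, hz1, hz2, hz3⟩ := hzX
        exact ⟨Sum.inl z, by rw [hold z hz1 hz2, hz3, hv]⟩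
      · by_cases h2' : v = y
        · subst h2'; rw [hy] at hv
          obtain ⟨z, hz1, hz2, hz3⟩ := hzX
          exact ⟨Sum.inl z, by rw [hold z hz1 hz2, hz3, hv]⟩
        · exact ⟨Sum.inl v, by rw [hold v h1 h2']; exact hv⟩
  · -- count of degree d
    rw [hreidx d, hsplitf d, hV_d, hfin d, if_neg (by omega), Finset.card_empty,
      Finset.card_sdiff_of_subset hsub_xy, hcard_xy]
    omega
  · -- count of degree 2
    rw [hreidx 2, hsplitf 2]
    have hfc : (univ.filter fun i : Fin (d-2) => H.degree (Sum.inr i) = 2).card = d - 2 := by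
      rw [hfin 2, if_pos rfl, Finset.card_univ, Fintype.card_fin]
    omega
  · -- other degrees
    intro k hk2 hkd
    rw [hreidx k, hsplitf k, hV_ne k hk2 hkd, hfin k, if_neg (fun h => hk2 h.symm),
      Finset.card_empty]
    omega
end

section
/- For any set D = {d_1 > ... > d_n} of positive integers, 2·ℓ_q(D) ≥ (Σ_{i=1}^{n} d_i) + (d_1 + 1 − n)·d_n, and consequently 2·ℓ_q(D) > (1 + √2)(n − 1)·d_n. -/
/-- The degree set of a finite simple graph: the set of distinct vertex degrees. -/
def degreeSet {V : Type} [Fintype V] (G : SimpleGraph V) [DecidableRel G.Adj] : Finset ℕ :=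
  Finset.univ.image (fun v => G.degree v)

/-- `lq D` is the least number of edges of a finite simple graph whose degree set is `D`. -/
noncomputable def lq (D : Finset ℕ) : ℕ :=
  sInf {q | ∃ (p : ℕ) (G : SimpleGraph (Fin p)) (inst : DecidableRel G.Adj),
    @degreeSet _ _ G inst = D ∧
    (@SimpleGraph.edgeFinset _ G (@SimpleGraph.fintypeEdgeSet _ G _ inst)).card = q}

open Finset

namespace LqAux

/-- correction term -/
def brk (n j : ℕ) : ℕ := if n ≤ 2 * j + 1 then 1 else 0

/-- position thresholds -/
def thr (n : ℕ) (a : ℕ → ℕ) (j : ℕ) : ℕ :=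
  if n - 1 ≤ j then 0 else a (n - 2 - j) + brk n (n - 2 - j)

/-- level of a vertex -/
noncomputable def lam (n : ℕ) (a : ℕ → ℕ) (u : ℕ) : ℕ := sInf {j | thr n a j ≤ u}

lemma brk_mono (n : ℕ) {i j : ℕ} (h : i ≤ j) : brk n i ≤ brk n j := by
  unfold brk; split_ifs <;> omega

lemma thr_anti {n : ℕ} {a : ℕ → ℕ} (hmono : Monotone a) {i j : ℕ} (hij : i ≤ j) :
    thr n a j ≤ thr n a i := by
  unfold thr
  split_ifs with h1 h2 h2
  · exact le_rfl
  · exact Nat.zero_le _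
  · omega
  · exact Nat.add_le_add (hmono (by omega)) (brk_mono n (by omega))

lemma thr_top (n : ℕ) (a : ℕ → ℕ) : thr n a (n - 1) = 0 := if_pos le_rfl

lemma thr_strict {n : ℕ} {a : ℕ → ℕ} (hmono : Monotone a)
    (hstrict : ∀ i j, i < j → j < n → a i < a j) (ha0 : 0 < a 0)
    {j : ℕ} (hj0 : 0 < j) (hj : j ≤ n - 1) : thr n a j < thr n a (j - 1) := by
  rcases eq_or_lt_of_le hj with rfl | hjlt
  · rw [thr_top]
    unfold thr
    rw [if_neg (by omega)]
    have := hmono (Nat.zero_le (n - 2 - (n - 1 - 1)))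
    omega
  · unfold thr
    rw [if_neg (by omega), if_neg (by omega)]
    have h1 : a (n - 2 - j) < a (n - 2 - (j - 1)) :=
      hstrict _ _ (by omega) (by omega)
    have h2 : brk n (n - 2 - j) ≤ brk n (n - 2 - (j - 1)) := brk_mono n (by omega)
    omega

lemma thr_le {n : ℕ} {a : ℕ → ℕ} (hmono : Monotone a)
    (hstrict : ∀ i j, i < j → j < n → a i < a j) (hn : 0 < n) (j : ℕ) :
    thr n a j ≤ a (n - 1) := by
  refine le_trans (thr_anti hmono (Nat.zero_le j)) ?_
  unfold thr
  split_ifs with h1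
  · exact Nat.zero_le _
  · have h2 : a (n - 2 - 0) < a (n - 1) := hstrict _ _ (by omega) (by omega)
    have h3 : brk n (n - 2 - 0) ≤ 1 := by unfold brk; split_ifs <;> omega
    omega

lemma lam_le_iff {n : ℕ} {a : ℕ → ℕ} (hmono : Monotone a) (u j : ℕ) :
    lam n a u ≤ j ↔ thr n a j ≤ u := by
  have hne : {k | thr n a k ≤ u}.Nonempty := ⟨n - 1, by simp [thr_top]⟩
  constructor
  · intro h
    have h1 : thr n a (lam n a u) ≤ u := Nat.sInf_mem hne
    exact le_trans (thr_anti hmono h) h1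
  · intro h
    exact Nat.sInf_le h

lemma lam_le {n : ℕ} {a : ℕ → ℕ} (hmono : Monotone a) (u : ℕ) : lam n a u ≤ n - 1 :=
  (lam_le_iff hmono u (n - 1)).2 (by rw [thr_top]; exact Nat.zero_le _)

/-- The threshold graph realizing degree set `{a 0 < a 1 < ⋯ < a (n-1)}`. -/
def myG (n : ℕ) (a : ℕ → ℕ) : SimpleGraph (Fin (a (n - 1) + 1)) :=
  SimpleGraph.fromRel (fun u v => n - 1 ≤ lam n a u.val + lam n a v.val)

lemma myG_adj (n : ℕ) (a : ℕ → ℕ) (u v : Fin (a (n - 1) + 1)) :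
    (myG n a).Adj u v ↔ u ≠ v ∧ n - 1 ≤ lam n a u.val + lam n a v.val := by
  unfold myG
  rw [SimpleGraph.fromRel_adj]
  constructor
  · rintro ⟨h1, h2 | h2⟩ <;> exact ⟨h1, by omega⟩
  · rintro ⟨h1, h2⟩; exact ⟨h1, Or.inl h2⟩

lemma card_filter_lt (m c : ℕ) (h : c ≤ m) :
    ((univ : Finset (Fin m)).filter fun v => v.val < c).card = c := by
  classical
  have he : ((univ : Finset (Fin m)).filter fun v => v.val < c) =
      (range c).attachFin (fun x hx => lt_of_lt_of_le (mem_range.mp hx) h) := by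
    ext v
    simp [Finset.mem_attachFin, Finset.mem_range]
  rw [he, card_attachFin, card_range]

lemma myG_degree {n : ℕ} {a : ℕ → ℕ} (hn : 0 < n) (hmono : Monotone a)
    (hstrict : ∀ i j, i < j → j < n → a i < a j) (ha0 : 0 < a 0)
    [inst : DecidableRel (myG n a).Adj] (u : Fin (a (n - 1) + 1)) :
    (myG n a).degree u = a (lam n a u.val) := by
  classical
  rw [SimpleGraph.degree, SimpleGraph.neighborFinset_eq_filter]
  set j := lam n a u.val with hj
  by_cases hcase : n - 1 ≤ j
  · have hjeq : j = n - 1 := le_antisymm (lam_le hmono u.val) hcase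
    have hfe : (univ.filter ((myG n a).Adj u)) = univ.erase u := by
      ext v
      simp only [mem_filter, mem_univ, true_and, mem_erase, myG_adj]
      constructor
      · rintro ⟨h1, _⟩; exact ⟨Ne.symm h1, trivial⟩
      · rintro ⟨h1, _⟩
        refine ⟨Ne.symm h1, ?_⟩
        omega
    rw [hfe, card_erase_of_mem (mem_univ u), card_univ, Fintype.card_fin, hjeq]
    omega
  · push_neg at hcase
    set c := a j + brk n j with hc
    have hthr : thr n a (n - 2 - j) = c := by
      unfold thr
      rw [if_neg (by omega), show n - 2 - (n - 2 - j) = j from by omega]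
    have key : ∀ w : ℕ, (n - 1 ≤ j + lam n a w) ↔ w < c := by
      intro w
      have h1 : lam n a w ≤ n - 2 - j ↔ thr n a (n - 2 - j) ≤ w := lam_le_iff hmono w _
      rw [hthr] at h1
      have h2 : lam n a w ≤ n - 1 := lam_le hmono w
      omega
    have hckey : u.val < c ↔ n ≤ 2 * j + 1 := by
      rw [← key u.val]
      omega
    have hcle : c ≤ a (n - 1) + 1 := by
      have := thr_le hmono hstrict hn (n - 2 - j)
      omega
    have hfe : (univ.filter ((myG n a).Adj u)) =
        univ.filter fun v : Fin (a (n - 1) + 1) => v.val < c ∧ v ≠ u := by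
      ext v
      simp only [mem_filter, mem_univ, true_and, myG_adj]
      rw [← key v.val]
      constructor
      · rintro ⟨h1, h2⟩; exact ⟨h2, Ne.symm h1⟩
      · rintro ⟨h1, h2⟩; exact ⟨Ne.symm h2, h1⟩
    rw [hfe]
    by_cases hu : u.val < c
    · have hbrk : brk n j = 1 := by unfold brk; rw [if_pos (hckey.mp hu)]
      have hfe2 : (univ.filter fun v : Fin (a (n - 1) + 1) => v.val < c ∧ v ≠ u) =
          (univ.filter fun v : Fin (a (n - 1) + 1) => v.val < c).erase u := by
        ext v
        simp only [mem_filter, mem_univ, true_and, mem_erase]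
        tauto
      rw [hfe2, card_erase_of_mem (by simp [hu]), card_filter_lt _ _ hcle]
      omega
    · have hbrk : brk n j = 0 := by
        unfold brk; rw [if_neg (fun h => hu (hckey.mpr h))]
      have hfe2 : (univ.filter fun v : Fin (a (n - 1) + 1) => v.val < c ∧ v ≠ u) =
          univ.filter fun v : Fin (a (n - 1) + 1) => v.val < c := by
        ext v
        simp only [mem_filter, mem_univ, true_and]
        constructor
        · tauto
        · intro h1
          refine ⟨h1, fun hvu => hu ?_⟩
          rw [← hvu]; exact h1
      rw [hfe2, card_filter_lt _ _ hcle]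
      omega

lemma lam_surj {n : ℕ} {a : ℕ → ℕ} (hn : 0 < n) (hmono : Monotone a)
    (hstrict : ∀ i j, i < j → j < n → a i < a j) (ha0 : 0 < a 0)
    {j : ℕ} (hj : j < n) : ∃ u : Fin (a (n - 1) + 1), lam n a u.val = j := by
  refine ⟨⟨thr n a j, Nat.lt_succ_of_le (thr_le hmono hstrict hn j)⟩, ?_⟩
  show lam n a (thr n a j) = j
  have h1 : lam n a (thr n a j) ≤ j := (lam_le_iff hmono _ _).2 le_rfl
  rcases Nat.eq_zero_or_pos j with rfl | hj0
  · omega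
  · have h2 : ¬ lam n a (thr n a j) ≤ j - 1 := by
      rw [lam_le_iff hmono]
      exact not_le.2 (thr_strict hmono hstrict ha0 hj0 (by omega))
    omega

lemma myG_degreeSet {n : ℕ} {a : ℕ → ℕ} (hn : 0 < n) (hmono : Monotone a)
    (hstrict : ∀ i j, i < j → j < n → a i < a j) (ha0 : 0 < a 0)
    [inst : DecidableRel (myG n a).Adj] :
    degreeSet (myG n a) = (range n).image a := by
  unfold degreeSet
  ext x
  simp only [mem_image, mem_univ, true_and, mem_range]
  constructor
  · rintro ⟨v, rfl⟩
    exact ⟨lam n a v.val, lt_of_le_of_lt (lam_le hmono v.val) (by omega),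
      (myG_degree hn hmono hstrict ha0 v).symm⟩
  · rintro ⟨j, hjn, rfl⟩
    obtain ⟨u, hu⟩ := lam_surj hn hmono hstrict ha0 hjn
    exact ⟨u, by rw [myG_degree hn hmono hstrict ha0, hu]⟩

lemma sum_degree_lower (D : Finset ℕ) (hne : D.Nonempty) {p : ℕ} (G : SimpleGraph (Fin p))
    [inst : DecidableRel G.Adj] (hD : degreeSet G = D) :
    ∑ x ∈ D, x + (D.max' hne + 1 - D.card) * D.min' hne ≤ ∑ v, G.degree v := by
  classical
  have hmem : ∀ x ∈ D, ∃ v : Fin p, G.degree v = x := by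
    intro x hx
    rw [← hD] at hx
    simpa [degreeSet] using hx
  choose g hg using hmem
  set I : Finset (Fin p) := D.attach.image (fun x => g x.1 x.2) with hI
  have hginj : Function.Injective (fun x : {x // x ∈ D} => g x.1 x.2) := by
    intro x y hxy
    have hxy' : g x.1 x.2 = g y.1 y.2 := hxy
    apply Subtype.ext
    rw [← hg x.1 x.2, ← hg y.1 y.2, hxy']
  have hinjcard : I.card = D.card := by
    rw [hI, Finset.card_image_of_injective _ hginj, card_attach]
  have hIsum : ∑ v ∈ I, G.degree v = ∑ x ∈ D, x := by
    rw [hI, Finset.sum_image (fun x _ y _ h => hginj h)]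
    calc ∑ x ∈ D.attach, G.degree (g x.1 x.2) = ∑ x ∈ D.attach, x.1 := by
          apply Finset.sum_congr rfl
          intro x _
          exact hg x.1 x.2
      _ = ∑ x ∈ D, x := Finset.sum_attach D (fun x => x)
  have hsub : I ⊆ univ := subset_univ _
  have hsplit : ∑ v ∈ univ \ I, G.degree v + ∑ v ∈ I, G.degree v = ∑ v, G.degree v :=
    Finset.sum_sdiff hsub
  have hrest : (univ \ I).card * D.min' hne ≤ ∑ v ∈ univ \ I, G.degree v := by
    have := Finset.card_nsmul_le_sum (univ \ I) (fun v => G.degree v) (D.min' hne)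
      (fun v _ => Finset.min'_le _ _ (by rw [← hD]; exact mem_image_of_mem _ (mem_univ v)))
    simpa using this
  have hpM : D.max' hne + 1 ≤ p := by
    have h2 := G.degree_lt_card_verts (g (D.max' hne) (D.max'_mem hne))
    rw [hg _ (D.max'_mem hne), Fintype.card_fin] at h2
    omega
  have hcard_sdiff : (univ \ I).card = p - D.card := by
    rw [card_sdiff_of_subset hsub, card_univ, Fintype.card_fin, hinjcard]
  have h1 : (D.max' hne + 1 - D.card) * D.min' hne ≤ (p - D.card) * D.min' hne :=
    Nat.mul_le_mul_right _ (by omega)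
  have h2 : (univ \ I).card * D.min' hne = (p - D.card) * D.min' hne := by
    rw [hcard_sdiff]
  omega

lemma card_le_max (D : Finset ℕ) (hne : D.Nonempty) : D.card ≤ D.max' hne + 1 := by
  have hsub : D ⊆ range (D.max' hne + 1) := fun x hx =>
    mem_range.2 (Nat.lt_succ_of_le (le_max' D x hx))
  simpa using card_le_card hsub

end LqAux

open LqAux

/-- For `D = {d₁ > … > dₙ}`, `2 ℓ_q(D) ≥ Σᵢ dᵢ + (d₁ + 1 − n) dₙ`, and
consequently `2 ℓ_q(D) > (1 + √2)(n − 1) dₙ`. -/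
theorem lq_sharper_lower_bound (D : Finset ℕ) (hne : D.Nonempty)
    (hpos : ∀ x ∈ D, 0 < x) :
    ((∑ x ∈ D, x : ℕ) : ℝ) + ((D.max' hne : ℝ) + 1 - D.card) * (D.min' hne : ℝ)
      ≤ 2 * (lq D : ℝ) ∧
    (1 + Real.sqrt 2) * ((D.card : ℝ) - 1) * (D.min' hne : ℝ) < 2 * (lq D : ℝ) := by
  classical
  set n := D.card with hnn
  have hn0 : 0 < n := card_pos.2 hne
  set a : ℕ → ℕ := fun j => D.orderEmbOfFin rfl ⟨min j (n - 1), by omega⟩ with ha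
  have hmono : Monotone a := by
    intro i j hij
    exact (D.orderEmbOfFin rfl).monotone (Fin.mk_le_mk.2 (by omega))
  have hstrict : ∀ i j, i < j → j < n → a i < a j := by
    intro i j hij hjn
    exact (D.orderEmbOfFin rfl).strictMono (Fin.mk_lt_mk.2 (by omega))
  have hain : ∀ j, a j ∈ D := fun j => D.orderEmbOfFin_mem rfl _
  have ha0 : 0 < a 0 := hpos _ (hain 0)
  have hmin : a 0 = D.min' hne := by
    have he : (⟨min 0 (n - 1), by omega⟩ : Fin n) = ⟨0, hn0⟩ := Fin.ext (by simp)
    have h2 : a 0 = D.orderEmbOfFin rfl ⟨0, hn0⟩ := by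
      rw [ha]; exact congrArg (D.orderEmbOfFin rfl) he
    rw [h2, Finset.orderEmbOfFin_zero rfl hn0]
  have hmax : a (n - 1) = D.max' hne := by
    have he : (⟨min (n - 1) (n - 1), by omega⟩ : Fin n) =
        ⟨n - 1, Nat.sub_lt hn0 Nat.one_pos⟩ := Fin.ext (by simp)
    have h2 : a (n - 1) = D.orderEmbOfFin rfl ⟨n - 1, Nat.sub_lt hn0 Nat.one_pos⟩ := by
      rw [ha]; exact congrArg (D.orderEmbOfFin rfl) he
    rw [h2, Finset.orderEmbOfFin_last rfl hn0]
  have himg : (range n).image a = D := by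
    apply Finset.Subset.antisymm
    · intro x hx
      simp only [mem_image] at hx
      obtain ⟨j, _, rfl⟩ := hx
      exact hain j
    · intro x hx
      have : x ∈ Set.range (D.orderEmbOfFin rfl) := by
        rw [Finset.range_orderEmbOfFin]; exact hx
      obtain ⟨i, hi⟩ := this
      refine mem_image.2 ⟨i.val, mem_range.2 i.isLt, ?_⟩
      have he : (⟨min i.val (n - 1), by omega⟩ : Fin n) = i :=
        Fin.ext (by simp; omega)
      have h2 : a i.val = D.orderEmbOfFin rfl i := by
        rw [ha]; exact congrArg (D.orderEmbOfFin rfl) he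
      rw [h2, hi]
  -- growth estimates
  have hgrow : ∀ j, j < n → a 0 + j ≤ a j := by
    intro j
    induction j with
    | zero => simp
    | succ k ih =>
      intro h
      have h1 := ih (by omega)
      have h2 := hstrict k (k + 1) (by omega) h
      omega
  have hsum_repr : ∑ x ∈ D, x = ∑ j ∈ range n, a j := by
    rw [← himg, Finset.sum_image]
    intro x hx y hy hxy
    by_contra hne'
    rcases lt_or_gt_of_ne hne' with h | h
    · exact absurd hxy (ne_of_lt (hstrict _ _ h (mem_range.1 hy)))
    · exact absurd hxy.symm (ne_of_lt (hstrict _ _ h (mem_range.1 hx)))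
  have hsum_lb : n * a 0 + (∑ i ∈ range n, i) ≤ ∑ x ∈ D, x := by
    rw [hsum_repr]
    calc n * a 0 + ∑ i ∈ range n, i = ∑ i ∈ range n, (a 0 + i) := by
          rw [Finset.sum_add_distrib, Finset.sum_const, card_range, smul_eq_mul]
      _ ≤ ∑ j ∈ range n, a j :=
          Finset.sum_le_sum (fun i hi => hgrow i (mem_range.1 hi))
  have hgauss : (∑ i ∈ range n, i) * 2 = n * (n - 1) := Finset.sum_range_id_mul_two n
  -- nonemptiness of the defining set of lq
  haveI instA : DecidableRel (myG n a).Adj := Classical.decRel _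
  have hDS : @degreeSet _ _ (myG n a) instA = D := by
    rw [myG_degreeSet hn0 hmono hstrict ha0, himg]
  have hmemS : lq D ∈ {q | ∃ (p : ℕ) (G : SimpleGraph (Fin p)) (inst : DecidableRel G.Adj),
      @degreeSet _ _ G inst = D ∧
      (@SimpleGraph.edgeFinset _ G (@SimpleGraph.fintypeEdgeSet _ G _ inst)).card = q} := by
    apply Nat.sInf_mem
    exact ⟨_, a (n - 1) + 1, myG n a, instA, hDS, rfl⟩
  obtain ⟨p, G, instG, hG, hq⟩ := hmemS
  -- handshake
  have hhs : ∑ v, @SimpleGraph.degree _ G v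
      (@SimpleGraph.neighborSetFintype _ G _ instG v) = 2 * lq D := by
    rw [← hq]
    exact @SimpleGraph.sum_degrees_eq_twice_card_edges _ G _ instG
  have hlow := @sum_degree_lower D hne p G instG hG
  rw [hhs] at hlow
  -- casting
  have hnM : n ≤ D.max' hne + 1 := card_le_max D hne
  set SN : ℕ := ∑ x ∈ D, x with hSN
  set mN : ℕ := D.min' hne with hmN
  set MN : ℕ := D.max' hne with hMN
  have hNat1 : SN + (MN + 1 - n) * mN ≤ 2 * lq D := hlow
  have hcast1 : (SN : ℝ) + ((MN : ℝ) + 1 - (n : ℝ)) * (mN : ℝ) ≤ 2 * (lq D : ℝ) := by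
    have h := (Nat.cast_le (α := ℝ)).2 hNat1
    push_cast [Nat.cast_sub hnM] at h
    linarith
  refine ⟨hcast1, ?_⟩
  have hNat2 : 2 * (n * mN) + n * (n - 1) ≤ 2 * SN := by
    have hx : n * a 0 = n * mN := by rw [hmin]
    omega
  have hS2 : 2 * (n : ℝ) * (mN : ℝ) + (n : ℝ) * ((n : ℝ) - 1) ≤ 2 * (SN : ℝ) := by
    have h := (Nat.cast_le (α := ℝ)).2 hNat2
    push_cast [Nat.cast_sub hn0] at h
    linarith
  have hMBn : mN + (n - 1) ≤ MN := by
    have h := hgrow (n - 1) (by omega)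
    rw [hmin, hmax] at h
    omega
  have hMB : (mN : ℝ) + ((n : ℝ) - 1) ≤ (MN : ℝ) := by
    have h := (Nat.cast_le (α := ℝ)).2 hMBn
    push_cast [Nat.cast_sub hn0] at h
    linarith
  have hm1 : (1 : ℝ) ≤ (mN : ℝ) := by exact_mod_cast hpos _ (D.min'_mem hne)
  have hsn1 : (1 : ℝ) ≤ (n : ℝ) := by exact_mod_cast hn0
  have hsqrt2 : Real.sqrt 2 ^ 2 = 2 := Real.sq_sqrt (by norm_num)
  have hsqrt0 : 0 ≤ Real.sqrt 2 := Real.sqrt_nonneg 2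
  have hmm : (mN : ℝ) * (mN : ℝ) ≤ ((MN : ℝ) + 1 - (n : ℝ)) * (mN : ℝ) := by
    apply mul_le_mul_of_nonneg_right _ (by linarith)
    linarith
  nlinarith [hcast1, hmm, hS2, sq_nonneg (((n : ℝ) - 1) - Real.sqrt 2 * (mN : ℝ)), hsqrt2,
    hsqrt0, hm1, hsn1, mul_nonneg (sub_nonneg.2 hsn1) (sub_nonneg.2 hm1)]
end

section
/- Let D = {d_1 > ... > d_n} be a set of positive integers, and let s̄ = a_1, ..., a_p be the canonical graphic sequence with degree set D consisting of one copy of each d_i (with possibly one extra copy of the smallest odd element when σ(D) is odd and d_n is even) and the minimum number of additional copies of d_n needed to make the sequence graphic. If s̄' = a'_1, ..., a'_{p'} is any graphic sequence with degree set D, then a_i ≤ a'_i for all 1 ≤ i ≤ min{p, p'}. -/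
/-- A list of natural numbers is graphic if it is the degree sequence of a
finite simple graph. -/
def IsGraphic (s : List ℕ) : Prop :=
  ∃ (G : SimpleGraph (Fin s.length)) (inst : DecidableRel G.Adj),
    ∀ i : Fin s.length, @SimpleGraph.degree _ G i (SimpleGraph.neighborSetFintype G i) = s.get i

/-- Single copies of `d 1, …, d (n-1)`, duplicating the smallest odd element
`d r` when `σ(D)` is odd and `d n` is even. -/
def canonBase (n : ℕ) (d : ℕ → ℕ) (r : ℕ) : List ℕ :=
  if Even (∑ i ∈ Finset.Icc 1 n, d i) ∨ Odd (d n) then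
    (List.range (n - 1)).map (fun i => d (i + 1))
  else
    (List.range r).map (fun i => d (i + 1)) ++ [d r]
      ++ (List.range (n - 1 - r)).map (fun i => d (r + i + 1))

/-- The canonical candidate sequence: `canonBase` followed by `C + 1` copies of
`d n`. -/
def canonSeq (n : ℕ) (d : ℕ → ℕ) (r : ℕ) (C : ℕ) : List ℕ :=
  canonBase n d r ++ List.replicate (C + 1) (d n)

lemma listSum_eq_get_sum (l : List ℕ) : ∑ i : Fin l.length, l.get i = l.sum := by
  induction l with
  | nil => simp
  | cons a t ih =>
    simp [Fin.sum_univ_succ, ih]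

lemma graphic_sum_even {s : List ℕ} (h : IsGraphic s) : Even s.sum := by
  obtain ⟨G, inst, hG⟩ := h
  have h2 := @SimpleGraph.sum_degrees_eq_twice_card_edges (Fin s.length) G _ inst
  have h3 : s.sum = ∑ v : Fin s.length,
      @SimpleGraph.degree _ G v (SimpleGraph.neighborSetFintype G v) := by
    rw [← listSum_eq_get_sum]
    refine (Finset.sum_congr rfl fun i _ => ?_).symm
    exact hG i
  rw [h3]
  exact ⟨_, by rw [h2]; ring⟩

lemma even_sum_iff_countP (l : List ℕ) :
    Even l.sum ↔ Even (l.countP (fun x => decide (Odd x))) := by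
  induction l with
  | nil => simp
  | cons a t ih =>
    rw [List.sum_cons, List.countP_cons, Nat.even_add, ih]
    rcases Nat.even_or_odd a with ha | ha
    · have h1 : ¬ Odd a := Nat.not_odd_iff_even.2 ha
      simp [ha, h1]
    · have h1 : ¬ Even a := Nat.not_even_iff_odd.2 ha
      rw [if_pos (by simpa using ha), Nat.even_add_one]
      simp only [h1, false_iff, Nat.not_even_iff_odd]

lemma sorted_getD_ge (s : List ℕ) (hs : s.Pairwise (· ≥ ·)) (v i : ℕ) (hi : i < s.length)
    (hc : i < s.countP (fun x => decide (v ≤ x))) : v ≤ s.getD i 0 := by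
  by_contra hlt
  push_neg at hlt
  rw [List.getD_eq_getElem _ _ hi] at hlt
  have hdrop : (s.drop i).countP (fun x => decide (v ≤ x)) = 0 := by
    rw [List.countP_eq_zero]
    intro a ha
    obtain ⟨k, hk, rfl⟩ := List.mem_iff_getElem.1 ha
    have hik : i + k < s.length := by
      rw [List.length_drop] at hk; omega
    rw [List.getElem_drop]
    have hrel := hs.rel_get_of_le (a := ⟨i, hi⟩) (b := ⟨i + k, hik⟩) (by simp)
    simp only [List.get_eq_getElem] at hrel
    simp only [decide_eq_true_eq, not_le]
    omega
  have hsplit := List.countP_append (p := fun x => decide (v ≤ x)) (l₁ := s.take i) (l₂ := s.drop i)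
  rw [List.take_append_drop] at hsplit
  have hle : (s.take i).countP (fun x => decide (v ≤ x)) ≤ i :=
    le_trans List.countP_le_length (by rw [List.length_take]; omega)
  omega

lemma card_le_countP (s : List ℕ) (p : ℕ → Bool) (F : Finset ℕ)
    (hmem : ∀ x ∈ F, x ∈ s) (hp : ∀ x ∈ F, p x) : F.card ≤ s.countP p := by
  classical
  have hle : F.val ≤ (↑s : Multiset ℕ) := by
    rw [Multiset.le_iff_count]
    intro a
    by_cases haF : a ∈ F
    · have h1 : F.val.count a ≤ 1 := Multiset.nodup_iff_count_le_one.1 F.nodup a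
      have h2 : 1 ≤ (↑s : Multiset ℕ).count a := by
        rw [Multiset.coe_count]
        exact List.one_le_count_iff.2 (hmem a haF)
      omega
    · rw [Multiset.count_eq_zero_of_notMem haF]; omega
  have h1 : (Multiset.countP (fun x => p x = true) F.val) = F.card :=
    Multiset.countP_eq_card.2 fun a ha => hp a ha
  have h2 := Multiset.countP_le_of_le (p := fun x => p x = true) hle
  rw [h1] at h2
  rw [Multiset.coe_countP] at h2
  simpa using h2

lemma card_add_one_le_countP (s : List ℕ) (p : ℕ → Bool) (F : Finset ℕ)
    (hmem : ∀ x ∈ F, x ∈ s) (hp : ∀ x ∈ F, p x) (a : ℕ) (haF : a ∈ F)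
    (ha2 : 2 ≤ s.count a) : F.card + 1 ≤ s.countP p := by
  classical
  have hle : (a ::ₘ F.val) ≤ (↑s : Multiset ℕ) := by
    rw [Multiset.le_iff_count]
    intro b
    rw [Multiset.count_cons]
    by_cases hba : b = a
    · subst hba
      rw [if_pos rfl]
      have h1 : F.val.count b ≤ 1 := Multiset.nodup_iff_count_le_one.1 F.nodup b
      have h2 : 2 ≤ (↑s : Multiset ℕ).count b := by rwa [Multiset.coe_count]
      omega
    · rw [if_neg hba]
      by_cases hbF : b ∈ F
      · have h1 : F.val.count b ≤ 1 := Multiset.nodup_iff_count_le_one.1 F.nodup b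
        have h2 : 1 ≤ (↑s : Multiset ℕ).count b := by
          rw [Multiset.coe_count]; exact List.one_le_count_iff.2 (hmem b hbF)
        omega
      · rw [Multiset.count_eq_zero_of_notMem hbF]; omega
  have h1 : (Multiset.countP (fun x => p x = true) (a ::ₘ F.val)) = F.card + 1 := by
    rw [Multiset.countP_eq_card.2 (fun b hb => by
      rcases Multiset.mem_cons.1 hb with rfl | hb
      · exact hp b haF
      · exact hp b hb)]
    simp
  have h2 := Multiset.countP_le_of_le (p := fun x => p x = true) hle
  rw [h1] at h2
  rw [Multiset.coe_countP] at h2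
  simpa using h2

/-- Lemma 5.1: the canonical graphic sequence `s̄` with degree set `D`
(single copies of each `dᵢ`, duplicating the smallest odd element when `σ(D)` is
odd and `d n` is even, with the minimal number of copies of `d n` making it
graphic) is termwise dominated by every graphic sequence with degree set `D`. -/
theorem canonical_termwise_least (n : ℕ) (hn : 0 < n) (d : ℕ → ℕ)
    (hanti : ∀ i j, 1 ≤ i → i < j → j ≤ n → d j < d i)
    (hpos : ∀ i ∈ Finset.Icc 1 n, 0 < d i)
    (r : ℕ)
    (hr : ¬(Even (∑ i ∈ Finset.Icc 1 n, d i) ∨ Odd (d n)) →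
      r ∈ Finset.Icc 1 n ∧ Odd (d r) ∧ ∀ i ∈ Finset.Icc 1 n, Odd (d i) → i ≤ r)
    (Cstar : ℕ) (hCg : IsGraphic (canonSeq n d r Cstar))
    (hCmin : ∀ C : ℕ, IsGraphic (canonSeq n d r C) → Cstar ≤ C) :
    ∀ s' : List ℕ, s'.Pairwise (· ≥ ·) → IsGraphic s' →
      s'.toFinset = (Finset.Icc 1 n).image d →
      ∀ i : ℕ, i < (canonSeq n d r Cstar).length → i < s'.length →
        (canonSeq n d r Cstar).getD i 0 ≤ s'.getD i 0 := by
  intro s' hsort hg hset i hi hi'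
  classical
  have hinj : ∀ a ∈ Finset.Icc 1 n, ∀ b ∈ Finset.Icc 1 n, d a = d b → a = b := by
    intro a ha b hb hab
    rw [Finset.mem_Icc] at ha hb
    by_contra hne
    rcases Nat.lt_or_ge a b with h | h
    · have := hanti a b ha.1 h hb.2; omega
    · have h' : b < a := by omega
      have := hanti b a hb.1 h' ha.2; omega
  have hmem : ∀ j, 1 ≤ j → j ≤ n → d j ∈ s' := by
    intro j h1 h2
    rw [← List.mem_toFinset, hset]
    exact Finset.mem_image_of_mem d (Finset.mem_Icc.2 ⟨h1, h2⟩)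
  have hdmono : ∀ j k, 1 ≤ j → j ≤ k → k ≤ n → d k ≤ d j := by
    intro j k h1 h2 h3
    rcases eq_or_lt_of_le h2 with rfl | h
    · exact le_rfl
    · exact (hanti j k h1 h h3).le
  have hall : ∀ x ∈ s', d n ≤ x := by
    intro x hx
    have hx' : x ∈ (Finset.Icc 1 n).image d := by
      rw [← hset]; exact List.mem_toFinset.2 hx
    obtain ⟨j, hj, rfl⟩ := Finset.mem_image.1 hx'
    rw [Finset.mem_Icc] at hj
    exact hdmono j n hj.1 hj.2 le_rfl
  have htail : s'.countP (fun x => decide (d n ≤ x)) = s'.length :=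
    List.countP_eq_length.2 fun a ha => decide_eq_true (hall a ha)
  have hcard : ∀ k, k ≤ n → ((Finset.Icc 1 k).image d).card = k := by
    intro k h2
    rw [Finset.card_image_of_injOn, Nat.card_Icc]
    · omega
    · intro a ha b hb hab
      simp only [Finset.coe_Icc, Set.mem_Icc] at ha hb
      exact hinj a (Finset.mem_Icc.2 ⟨ha.1, ha.2.trans h2⟩)
        b (Finset.mem_Icc.2 ⟨hb.1, hb.2.trans h2⟩) hab
  have hFmem : ∀ k, k ≤ n → ∀ x ∈ (Finset.Icc 1 k).image d, x ∈ s' := by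
    intro k h2 x hx
    obtain ⟨j, hj, rfl⟩ := Finset.mem_image.1 hx
    rw [Finset.mem_Icc] at hj
    exact hmem j hj.1 (hj.2.trans h2)
  have hFpred : ∀ k, k ≤ n → ∀ x ∈ (Finset.Icc 1 k).image d,
      (fun x => decide (d k ≤ x)) x = true := by
    intro k h2 x hx
    obtain ⟨j, hj, rfl⟩ := Finset.mem_image.1 hx
    rw [Finset.mem_Icc] at hj
    exact decide_eq_true (hdmono j k hj.1 hj.2 h2)
  have hstep : ∀ k, 1 ≤ k → k ≤ n → k ≤ s'.countP (fun x => decide (d k ≤ x)) := by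
    intro k h1 h2
    have := card_le_countP s' (fun x => decide (d k ≤ x)) ((Finset.Icc 1 k).image d)
      (hFmem k h2) (hFpred k h2)
    rwa [hcard k h2] at this
  by_cases hc : Even (∑ i ∈ Finset.Icc 1 n, d i) ∨ Odd (d n)
  · -- even case
    have hbase : canonBase n d r = (List.range (n-1)).map (fun i => d (i+1)) := by
      rw [canonBase, if_pos hc]
    have hlen : (canonBase n d r).length = n - 1 := by rw [hbase]; simp
    have hci : i < (n - 1) + (Cstar + 1) := by
      rw [canonSeq, List.length_append, hlen, List.length_replicate] at hi; exact hi
    by_cases hilt : i < n - 1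
    · have hv : (canonSeq n d r Cstar).getD i 0 = d (i+1) := by
        rw [canonSeq, List.getD_append _ _ _ _ (by rw [hlen]; exact hilt), hbase,
          List.getD_eq_getElem _ _ (by simpa using hilt)]
        simp
      rw [hv]
      exact sorted_getD_ge s' hsort _ i hi'
        (lt_of_lt_of_le (Nat.lt_succ_self i) (hstep (i+1) (by omega) (by omega)))
    · have hv : (canonSeq n d r Cstar).getD i 0 = d n := by
        rw [canonSeq, List.getD_append_right _ _ _ _ (by rw [hlen]; omega),
          List.getD_eq_getElem _ _ (by simp [hlen]; omega)]
        simp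
      rw [hv]
      exact sorted_getD_ge s' hsort _ i hi' (by rw [htail]; exact hi')
  · -- odd case
    obtain ⟨hrIcc, hrodd, hrmax⟩ := hr hc
    rw [Finset.mem_Icc] at hrIcc
    push_neg at hc
    obtain ⟨hc1, hc2⟩ := hc
    have hrn : r < n := by
      rcases eq_or_lt_of_le hrIcc.2 with rfl | h
      · exact absurd hrodd hc2
      · exact h
    have hbase : canonBase n d r = (List.range r).map (fun i => d (i + 1)) ++ [d r]
        ++ (List.range (n - 1 - r)).map (fun i => d (r + i + 1)) := by
      rw [canonBase, if_neg (not_or.2 ⟨hc1, hc2⟩)]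
    have hlen : (canonBase n d r).length = n := by
      rw [hbase]; simp; omega
    have hci : i < n + (Cstar + 1) := by
      rw [canonSeq, List.length_append, hlen, List.length_replicate] at hi; exact hi
    -- existence of a duplicated odd value
    have hdup : ∃ j, 1 ≤ j ∧ j ≤ r ∧ 2 ≤ s'.count (d j) := by
      by_contra hno
      push_neg at hno
      have heven : Even (s'.countP (fun x => decide (Odd x))) :=
        (even_sum_iff_countP s').1 (graphic_sum_even hg)
      have hcle : ∀ a : ℕ, Odd a → s'.count a ≤ 1 := by
        intro a ha
        by_cases hm : a ∈ s'
        · have hx' : a ∈ (Finset.Icc 1 n).image d := by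
            rw [← hset]; exact List.mem_toFinset.2 hm
          obtain ⟨j, hj, rfl⟩ := Finset.mem_image.1 hx'
          have hjr : j ≤ r := hrmax j hj ha
          rw [Finset.mem_Icc] at hj
          have := hno j hj.1 hjr
          omega
        · rw [List.count_eq_zero_of_not_mem hm]; omega
      have hnodup : ((↑s' : Multiset ℕ).filter Odd).Nodup := by
        rw [Multiset.nodup_iff_count_le_one]
        intro a
        rw [Multiset.count_filter]
        split
        · rw [Multiset.coe_count]; exact hcle a (by assumption)
        · omega
      have hcc : (s'.countP (fun x => decide (Odd x)))
          = Multiset.card ((↑s' : Multiset ℕ).filter Odd) := by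
        rw [← Multiset.coe_countP, Multiset.countP_eq_card_filter]
      have htf : ((↑s' : Multiset ℕ).filter Odd).toFinset
          = ((Finset.Icc 1 n).filter (fun j => Odd (d j))).image d := by
        rw [Multiset.toFinset_filter]
        have h0 : (↑s' : Multiset ℕ).toFinset = s'.toFinset := rfl
        rw [h0, hset, Finset.filter_image]
      have hcard3 : (((Finset.Icc 1 n).filter fun j => Odd (d j)).image d).card
          = ((Finset.Icc 1 n).filter fun j => Odd (d j)).card := by
        apply Finset.card_image_of_injOn
        intro a ha b hb hab
        simp only [Finset.coe_filter, Set.mem_setOf_eq] at ha hb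
        exact hinj a ha.1 b hb.1 hab
      have hodd : Odd (((Finset.Icc 1 n).filter fun j => Odd (d j)).card) :=
        (Finset.odd_sum_iff_odd_card_odd d).1 (Nat.odd_iff.2 (by
          rw [Nat.even_iff] at hc1; omega))
      rw [hcc, ← Multiset.toFinset_card_of_nodup hnodup, htf, hcard3] at heven
      exact (Nat.not_even_iff_odd.2 hodd) heven
    obtain ⟨j0, hj01, hj0r, hj0c⟩ := hdup
    have hstep2 : ∀ k, r ≤ k → k ≤ n → k + 1 ≤ s'.countP (fun x => decide (d k ≤ x)) := by
      intro k hk1 hk2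
      have := card_add_one_le_countP s' (fun x => decide (d k ≤ x))
        ((Finset.Icc 1 k).image d) (hFmem k hk2) (hFpred k hk2) (d j0)
        (Finset.mem_image_of_mem d (Finset.mem_Icc.2 ⟨hj01, hj0r.trans hk1⟩)) hj0c
      rwa [hcard k hk2] at this
    by_cases hin : n ≤ i
    · have hv : (canonSeq n d r Cstar).getD i 0 = d n := by
        rw [canonSeq, List.getD_append_right _ _ _ _ (by rw [hlen]; omega),
          List.getD_eq_getElem _ _ (by simp [hlen]; omega)]
        simp
      rw [hv]
      exact sorted_getD_ge s' hsort _ i hi' (by rw [htail]; exact hi')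
    · push_neg at hin
      have hgetbase : (canonSeq n d r Cstar).getD i 0 = (canonBase n d r).getD i 0 := by
        rw [canonSeq, List.getD_append _ _ _ _ (by rw [hlen]; exact hin)]
      by_cases hir : i < r
      · have hv : (canonBase n d r).getD i 0 = d (i+1) := by
          rw [hbase, List.getD_append _ _ _ _ (by simp; omega),
            List.getD_append _ _ _ _ (by simp; omega),
            List.getD_eq_getElem _ _ (by simpa using hir)]
          simp
        rw [hgetbase, hv]
        exact sorted_getD_ge s' hsort _ i hi'
          (lt_of_lt_of_le (Nat.lt_succ_self i) (hstep (i+1) (by omega) (by omega)))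
      · push_neg at hir
        have hv : (canonBase n d r).getD i 0 = d i := by
          rcases eq_or_lt_of_le hir with heq | hlt
          · subst heq
            rw [hbase, List.getD_append _ _ _ _ (by simp),
              List.getD_append_right _ _ _ _ (by simp)]
            simp
          · rw [hbase, List.getD_append_right _ _ _ _ (by simp; omega),
              List.getD_eq_getElem _ _ (by simp; omega)]
            simp only [List.length_append, List.length_map, List.length_range,
              List.getElem_map, List.getElem_range]
            congr 1
            simp
            omega
        rw [hgetbase, hv]
        have := hstep2 i hir (le_of_lt hin)
        exact sorted_getD_ge s' hsort _ i hi' (by omega)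
end
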